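/- arXiv:2211.16729 — 6 statements merged into one kernel-verified Lean document; each statement's English description precedes it below -/
import Mathlib

section
/- For every integer m ≥ 1, every k > 0 and every τ > 0, the following identity holds: ∫₀^τ ( k² J_m'(kr)² r + m² J_m(kr)²/r ) dr = k² ∫₀^τ J_{m−1}(kr)² r dr − m · J_m(kτ)². -/
open MeasureTheory Filter Set

/-- The Bessel function of the first kind of order `ν`:
`J_ν(x) = ∑ₖ (-1)^k / (k! Γ(ν+k+1)) (x/2)^(2k+ν)`. -/
noncomputable def besselJ (ν : ℝ) (x : ℝ) : ℝ :=
  ∑' k : ℕ, ((-1 : ℝ) ^ k / ((k.factorial : ℝ) * Real.Gamma (ν + (k : ℝ) + 1))) *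
    (x / 2) ^ (2 * (k : ℝ) + ν)

/-- The derivative `J_ν'` of the Bessel function. -/
noncomputable def besselJDeriv (ν : ℝ) (x : ℝ) : ℝ := deriv (besselJ ν) x

/-- `besselJZero ν s` is the `s`-th positive zero of `J_ν` (for `s ≥ 1`),
listed in increasing order. -/
noncomputable def besselJZero (ν : ℝ) : ℕ → ℝ
  | 0 => 0
  | s + 1 => sInf {x : ℝ | besselJZero ν s < x ∧ besselJ ν x = 0}

/-- `besselJPrimeZero ν s` is the `s`-th positive zero of `J_ν'` (for `s ≥ 1`),
listed in increasing order. -/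
noncomputable def besselJPrimeZero (ν : ℝ) : ℕ → ℝ
  | 0 => 0
  | s + 1 => sInf {x : ℝ | besselJPrimeZero ν s < x ∧ besselJDeriv ν x = 0}

namespace BesselAux

noncomputable def c (n k : ℕ) : ℝ := (-1) ^ k / ((k.factorial : ℝ) * ((n + k).factorial : ℝ))

noncomputable def S (b : ℕ → ℝ) (p : ℕ) (x : ℝ) : ℝ := ∑' k : ℕ, b k * (x / 2) ^ (2 * k + p)

lemma nat_bound (p k : ℕ) : (2 * (k:ℝ) + p + 1 : ℝ) ≤ ((p:ℝ) + 3) * 2 ^ k := by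
  have h2 : (k : ℝ) + 1 ≤ 2 ^ k := by exact_mod_cast (Nat.lt_two_pow_self (n := k))
  have hp : (0:ℝ) ≤ p := by positivity
  nlinarith [pow_pos (by norm_num : (0:ℝ) < 2) k]

lemma summable_major (A B : ℝ) (hA : 0 ≤ A) (hB : 1 ≤ B) (M : ℝ) (hM : 1 ≤ M) (p : ℕ) :
    Summable (fun k : ℕ => A * B ^ k / (k.factorial : ℝ) * ((2 * k + p + 1) * M ^ (2 * k + p))) := by
  have hs : Summable (fun k : ℕ => (A * (p + 3) * M ^ p) * ((2 * B * M ^ 2) ^ k / (k.factorial : ℝ))) :=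
    (Real.summable_pow_div_factorial (2 * B * M ^ 2)).mul_left _
  refine Summable.of_nonneg_of_le (fun k => by positivity) (fun k => ?_) hs
  have key := nat_bound p k
  have e1 : A * B ^ k / (k.factorial : ℝ) * ((2 * k + p + 1) * M ^ (2 * k + p))
      = (A * B ^ k * M ^ (2 * k + p) / (k.factorial : ℝ)) * (2 * (k:ℝ) + p + 1) := by
    push_cast; ring
  have e2 : (A * (p + 3) * M ^ p) * ((2 * B * M ^ 2) ^ k / (k.factorial : ℝ))
      = (A * B ^ k * M ^ (2 * k + p) / (k.factorial : ℝ)) * (((p:ℝ) + 3) * 2 ^ k) := by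
    rw [mul_pow, mul_pow, ← pow_mul, pow_add]; push_cast; ring
  rw [e1, e2]
  exact mul_le_mul_of_nonneg_left key (by positivity)

end BesselAux

namespace BesselAux

variable {b : ℕ → ℝ} {A B : ℝ}

lemma term_bound (hA : 0 ≤ A) (hB : 1 ≤ B) (hb : ∀ k, |b k| ≤ A * B ^ k / (k.factorial : ℝ))
    {M : ℝ} (hM : 1 ≤ M) (p : ℕ) {x : ℝ} (hx : |x| ≤ 2 * M) (k : ℕ) :
    ‖b k * (((2 * k + p : ℕ) : ℝ) * (x / 2) ^ (2 * k + p - 1) * (1 / 2))‖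
      ≤ A * B ^ k / (k.factorial : ℝ) * ((2 * k + p + 1) * M ^ (2 * k + p)) := by
  have hM0 : (0:ℝ) < M := by linarith
  have hxd : |x / 2| ≤ M := by rw [abs_div]; simp; linarith [abs_nonneg x]
  have h1 : |(x / 2) ^ (2 * k + p - 1)| ≤ M ^ (2 * k + p - 1) := by
    rw [abs_pow]; exact pow_le_pow_left₀ (abs_nonneg _) hxd _
  have h2 : M ^ (2 * k + p - 1) ≤ M ^ (2 * k + p) := pow_le_pow_right₀ hM (by omega)
  have hy : |(x / 2) ^ (2 * k + p - 1)| ≤ M ^ (2 * k + p) := h1.trans h2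
  have hN : |((2 * k + p : ℕ) : ℝ)| ≤ 2 * (k:ℝ) + p + 1 := by
    rw [abs_of_nonneg (by positivity)]; push_cast; linarith
  have hhalf : |(1:ℝ) / 2| ≤ 1 := by rw [abs_of_nonneg (by norm_num : (0:ℝ) ≤ 1/2)]; norm_num
  rw [Real.norm_eq_abs, abs_mul, abs_mul, abs_mul]
  calc |b k| * (|((2 * k + p : ℕ) : ℝ)| * |(x / 2) ^ (2 * k + p - 1)| * |(1:ℝ) / 2|)
      ≤ (A * B ^ k / (k.factorial : ℝ)) * ((2 * (k:ℝ) + p + 1) * M ^ (2 * k + p) * 1) := by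
        refine mul_le_mul (hb k) ?_ (by positivity) (by positivity)
        exact mul_le_mul (mul_le_mul hN hy (abs_nonneg _) (by positivity)) hhalf
          (abs_nonneg _) (by positivity)
    _ = A * B ^ k / (k.factorial : ℝ) * ((2 * k + p + 1) * M ^ (2 * k + p)) := by
        push_cast; ring

lemma summable_term (hA : 0 ≤ A) (hB : 1 ≤ B) (hb : ∀ k, |b k| ≤ A * B ^ k / (k.factorial : ℝ))
    (p : ℕ) (x : ℝ) : Summable (fun k : ℕ => b k * (x / 2) ^ (2 * k + p)) := by
  set M : ℝ := max (|x| / 2) 1 with hMdef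
  have hM : 1 ≤ M := le_max_right _ _
  have hM0 : (0:ℝ) < M := by linarith
  have hxd : |x / 2| ≤ M := by rw [abs_div, abs_two]; exact le_max_left _ _
  refine Summable.of_norm (Summable.of_nonneg_of_le (fun k => norm_nonneg _) (fun k => ?_)
    (summable_major A B hA hB M hM p))
  rw [Real.norm_eq_abs, abs_mul, abs_pow]
  have h1 : |x / 2| ^ (2 * k + p) ≤ M ^ (2 * k + p) := pow_le_pow_left₀ (abs_nonneg (x/2)) hxd (2*k+p)
  have h2 : M ^ (2 * k + p) ≤ (2 * (k:ℝ) + p + 1) * M ^ (2 * k + p) :=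
    le_mul_of_one_le_left (by positivity) (by have h0 : (0:ℝ) ≤ (k:ℝ) := Nat.cast_nonneg k; have h0' : (0:ℝ) ≤ (p:ℝ) := Nat.cast_nonneg p; linarith)
  calc |b k| * |x / 2| ^ (2 * k + p)
      ≤ (A * B ^ k / (k.factorial : ℝ)) * ((2 * (k:ℝ) + p + 1) * M ^ (2 * k + p)) :=
        mul_le_mul (hb k) (h1.trans h2) (by positivity) (by positivity)
    _ = _ := by push_cast; ring

lemma half_deriv (y : ℝ) : HasDerivAt (fun z : ℝ => z / 2) ((1:ℝ)/2) y := by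
  simpa using (hasDerivAt_id y).div_const 2

lemma hasDerivAt_S (hA : 0 ≤ A) (hB : 1 ≤ B) (hb : ∀ k, |b k| ≤ A * B ^ k / (k.factorial : ℝ))
    (p : ℕ) (x : ℝ) :
    HasDerivAt (S b p)
      (∑' k : ℕ, b k * (((2 * k + p : ℕ) : ℝ) * (x / 2) ^ (2 * k + p - 1) * (1 / 2))) x := by
  set M : ℝ := max ((|x| + 1) / 2) 1 with hMdef
  have hM : 1 ≤ M := le_max_right _ _
  have hball : x ∈ Metric.ball (0:ℝ) (|x| + 1) := by
    simp only [Metric.mem_ball, dist_zero_right, Real.norm_eq_abs]; linarith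
  refine hasDerivAt_tsum_of_isPreconnected
    (summable_major A B hA hB M hM p)
    Metric.isOpen_ball ((convex_ball (0:ℝ) (|x| + 1)).isPreconnected)
    (fun n y _ => ((half_deriv y).pow (2 * n + p)).const_mul (b n))
    (fun n y hy => term_bound hA hB hb hM p ?_ n)
    hball (summable_term hA hB hb p x) hball
  simp only [Metric.mem_ball, dist_zero_right, Real.norm_eq_abs] at hy
  have : |x| + 1 ≤ 2 * M := by
    have := le_max_left ((|x| + 1) / 2) 1
    linarith
  linarith

lemma continuous_S (hA : 0 ≤ A) (hB : 1 ≤ B)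
    (hb : ∀ k, |b k| ≤ A * B ^ k / (k.factorial : ℝ)) (p : ℕ) : Continuous (S b p) := by
  have : Differentiable ℝ (S b p) := fun x => (hasDerivAt_S hA hB hb p x).differentiableAt
  exact this.continuous

end BesselAux

namespace BesselAux

lemma besselJ_natCast (n : ℕ) : besselJ (n : ℝ) = S (c n) n := by
  funext x
  unfold besselJ S c
  congr 1
  funext k
  have h1 : ((n:ℝ) + (k:ℝ) + 1) = ((n + k : ℕ) : ℝ) + 1 := by push_cast; ring
  have h2 : (2 * (k:ℝ) + (n:ℝ)) = ((2 * k + n : ℕ) : ℝ) := by push_cast; ring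
  rw [h1, Real.Gamma_nat_eq_factorial, h2, Real.rpow_natCast]

lemma c_bound (n : ℕ) (k : ℕ) : |c n k| ≤ 1 * 1 ^ k / (k.factorial : ℝ) := by
  unfold c
  have habs : |(-1:ℝ) ^ k / ((k.factorial : ℝ) * ((n + k).factorial : ℝ))|
      = 1 / ((k.factorial : ℝ) * ((n + k).factorial : ℝ)) := by
    rw [abs_div, abs_pow, abs_neg, abs_one, one_pow,
      abs_of_nonneg (by positivity : (0:ℝ) ≤ (k.factorial : ℝ) * ((n + k).factorial : ℝ))]
  rw [habs, one_pow, one_mul, div_le_div_iff₀ (by positivity) (by positivity)]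
  have h1 : (1:ℝ) ≤ ((n + k).factorial : ℝ) := by exact_mod_cast (n + k).factorial_pos
  nlinarith [show (0:ℝ) < (k.factorial : ℝ) by positivity]

lemma c'_bound (m : ℕ) (k : ℕ) :
    |c m k * ((2 * k + m : ℕ) : ℝ) / 2| ≤ ((m:ℝ) + 2) * 2 ^ k / (k.factorial : ℝ) := by
  have h1 := c_bound m k
  rw [one_mul, one_pow] at h1
  have h2 : ((2 * k + m : ℕ) : ℝ) ≤ ((m:ℝ) + 2) * 2 ^ k := by
    have hk2 : (k : ℝ) + 1 ≤ 2 ^ k := by exact_mod_cast (Nat.lt_two_pow_self (n := k))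
    have h0 : (0:ℝ) ≤ (m:ℝ) := Nat.cast_nonneg m
    have h0' : (0:ℝ) ≤ (k:ℝ) := Nat.cast_nonneg k
    push_cast
    nlinarith
  rw [abs_div, abs_mul, abs_two,
    show |((2 * k + m : ℕ) : ℝ)| = ((2 * k + m : ℕ) : ℝ) from abs_of_nonneg (Nat.cast_nonneg _)]
  rw [div_le_div_iff₀ (by norm_num) (by positivity)]
  have hk : (0:ℝ) < (k.factorial : ℝ) := by positivity
  have hb : |c m k| * ((2 * k + m : ℕ) : ℝ) ≤ (1 / (k.factorial : ℝ)) * (((m:ℝ) + 2) * 2 ^ k) :=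
    mul_le_mul h1 h2 (Nat.cast_nonneg _) (by positivity)
  calc |c m k| * ((2 * k + m : ℕ) : ℝ) * (k.factorial : ℝ)
      ≤ (1 / (k.factorial : ℝ)) * (((m:ℝ) + 2) * 2 ^ k) * (k.factorial : ℝ) := by
        exact mul_le_mul_of_nonneg_right hb hk.le
    _ = ((m:ℝ) + 2) * 2 ^ k := by field_simp
    _ ≤ ((m:ℝ) + 2) * 2 ^ k * 2 := by nlinarith [pow_pos (by norm_num : (0:ℝ) < 2) k]

lemma besselJDeriv_eq (m : ℕ) (hm : 1 ≤ m) :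
    besselJDeriv (m : ℝ) = S (fun k => c m k * ((2 * k + m : ℕ) : ℝ) / 2) (m - 1) := by
  funext x
  unfold besselJDeriv
  rw [besselJ_natCast]
  rw [(hasDerivAt_S (b := c m) zero_le_one le_rfl (c_bound m) m x).deriv]
  unfold S
  congr 1
  funext k
  have he : 2 * k + m - 1 = 2 * k + (m - 1) := by omega
  rw [he]; ring

lemma hasDerivAt_besselJ (m : ℕ) (x : ℝ) :
    HasDerivAt (besselJ (m : ℝ)) (besselJDeriv (m : ℝ) x) x := by
  have h := hasDerivAt_S (b := c m) zero_le_one le_rfl (c_bound m) m x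
  rw [← besselJ_natCast] at h
  exact h.differentiableAt.hasDerivAt

lemma besselJ_zero_eval (m : ℕ) (hm : 1 ≤ m) : besselJ (m : ℝ) 0 = 0 := by
  rw [besselJ_natCast]
  unfold S
  have : (fun k : ℕ => c m k * ((0:ℝ) / 2) ^ (2 * k + m)) = fun _ => (0:ℝ) := by
    funext k
    rw [zero_div, zero_pow (by omega : 2 * k + m ≠ 0), mul_zero]
  rw [this, tsum_zero]

lemma c_rec (m k : ℕ) (hm : 1 ≤ m) : c m k * ((k:ℝ) + m) = c (m - 1) k := by
  unfold c
  have h1 : m + k = (m - 1 + k) + 1 := by omega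
  rw [h1, Nat.factorial_succ]
  have h2 : ((m - 1 + k + 1 : ℕ) : ℝ) = (k:ℝ) + m := by
    have : m - 1 + k + 1 = m + k := by omega
    rw [this]; push_cast; ring
  push_cast [h2]
  have hf1 : (0:ℝ) < (k.factorial : ℝ) := by positivity
  have hf2 : (0:ℝ) < ((m - 1 + k).factorial : ℝ) := by positivity
  have hf3 : (0:ℝ) < (k:ℝ) + m := by
    have : (1:ℝ) ≤ (m:ℝ) := by exact_mod_cast hm
    have : (0:ℝ) ≤ (k:ℝ) := Nat.cast_nonneg k
    linarith
  field_simp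

lemma recurrence (m : ℕ) (hm : 1 ≤ m) (x : ℝ) :
    x * besselJDeriv (m : ℝ) x + (m : ℝ) * besselJ (m : ℝ) x = x * besselJ ((m:ℝ) - 1) x := by
  have hcast : ((m:ℝ) - 1) = ((m - 1 : ℕ) : ℝ) := by
    rw [Nat.cast_sub hm]; norm_num
  rw [hcast, besselJ_natCast, besselJ_natCast, besselJDeriv_eq m hm]
  unfold S
  have hs1 : Summable (fun k : ℕ => (c m k * ((2 * k + m : ℕ) : ℝ) / 2) * (x / 2) ^ (2 * k + (m - 1))) :=
    summable_term (A := (m:ℝ) + 2) (B := 2) (by positivity) one_le_two (c'_bound m) (m - 1) x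
  have hs2 : Summable (fun k : ℕ => c m k * (x / 2) ^ (2 * k + m)) :=
    summable_term (A := 1) (B := 1) zero_le_one le_rfl (c_bound m) m x
  rw [← tsum_mul_left, ← tsum_mul_left, ← tsum_mul_left,
    ← Summable.tsum_add (hs1.mul_left x) (hs2.mul_left (m:ℝ))]
  congr 1
  funext k
  have hck := c_rec m k hm
  have he : 2 * k + m = (2 * k + (m - 1)) + 1 := by omega
  rw [he, pow_succ]
  push_cast [Nat.cast_sub hm]
  linear_combination (x * ((x/2) ^ (2 * k + (m - 1)))) * hck

end BesselAux

open BesselAux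

/-- For every integer `m ≥ 1`, `k > 0`, `τ > 0`:
`∫₀^τ (k² J_m'(kr)² r + m² J_m(kr)²/r) dr = k² ∫₀^τ J_{m-1}(kr)² r dr - m J_m(kτ)²`. -/
theorem stmt0 (m : ℕ) (hm : 1 ≤ m) (k : ℝ) (hk : 0 < k) (τ : ℝ) (hτ : 0 < τ) :
    (∫ r in (0:ℝ)..τ,
        (k ^ 2 * (besselJDeriv m (k * r)) ^ 2 * r
          + (m : ℝ) ^ 2 * (besselJ m (k * r)) ^ 2 / r))
      = k ^ 2 * (∫ r in (0:ℝ)..τ, (besselJ ((m : ℝ) - 1) (k * r)) ^ 2 * r)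
          - (m : ℝ) * (besselJ m (k * τ)) ^ 2 := by
  have hcast : ((m:ℝ) - 1) = ((m - 1 : ℕ) : ℝ) := by rw [Nat.cast_sub hm]; norm_num
  have contJ : Continuous (besselJ (m:ℝ)) := by
    rw [besselJ_natCast]; exact continuous_S zero_le_one le_rfl (c_bound m) m
  have contJd : Continuous (besselJDeriv (m:ℝ)) := by
    rw [besselJDeriv_eq m hm]
    exact continuous_S (by positivity) one_le_two (c'_bound m) (m - 1)
  have contJm1 : Continuous (besselJ ((m:ℝ) - 1)) := by
    rw [hcast, besselJ_natCast]
    exact continuous_S zero_le_one le_rfl (c_bound (m - 1)) (m - 1)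
  have contkr : Continuous (fun r : ℝ => k * r) := continuous_const.mul continuous_id
  have hF : ∀ r : ℝ, HasDerivAt (fun r => (m:ℝ) * (besselJ (m:ℝ) (k * r)) ^ 2)
      ((m:ℝ) * (2 * besselJ (m:ℝ) (k * r) ^ 1 * (besselJDeriv (m:ℝ) (k * r) * k))) r := by
    intro r
    have h1 : HasDerivAt (fun r : ℝ => k * r) k r := by
      simpa using (hasDerivAt_id r).const_mul k
    exact (((hasDerivAt_besselJ m (k * r)).comp r h1).pow 2).const_mul (m:ℝ)
  have contF' : Continuous
      (fun r => (m:ℝ) * (2 * besselJ (m:ℝ) (k * r) ^ 1 * (besselJDeriv (m:ℝ) (k * r) * k))) :=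
    continuous_const.mul ((continuous_const.mul ((contJ.comp contkr).pow 1)).mul
      ((contJd.comp contkr).mul continuous_const))
  have hint2 : IntervalIntegrable
      (fun r => (m:ℝ) * (2 * besselJ (m:ℝ) (k * r) ^ 1 * (besselJDeriv (m:ℝ) (k * r) * k)))
      volume 0 τ := contF'.intervalIntegrable 0 τ
  have hint1 : IntervalIntegrable
      (fun r => k ^ 2 * (besselJ ((m:ℝ) - 1) (k * r)) ^ 2 * r) volume 0 τ :=
    ((continuous_const.mul ((contJm1.comp contkr).pow 2)).mul continuous_id).intervalIntegrable 0 τ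
  have hFTC : (∫ r in (0:ℝ)..τ,
        ((m:ℝ) * (2 * besselJ (m:ℝ) (k * r) ^ 1 * (besselJDeriv (m:ℝ) (k * r) * k))))
      = (m:ℝ) * (besselJ (m:ℝ) (k * τ)) ^ 2 - (m:ℝ) * (besselJ (m:ℝ) (k * 0)) ^ 2 :=
    intervalIntegral.integral_eq_sub_of_hasDerivAt (fun r _ => hF r) hint2
  have hne : ∀ r ∈ Set.Ioc (0:ℝ) τ,
      (k ^ 2 * (besselJDeriv m (k * r)) ^ 2 * r + (m : ℝ) ^ 2 * (besselJ m (k * r)) ^ 2 / r)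
      = k ^ 2 * (besselJ ((m:ℝ) - 1) (k * r)) ^ 2 * r
        - ((m:ℝ) * (2 * besselJ (m:ℝ) (k * r) ^ 1 * (besselJDeriv (m:ℝ) (k * r) * k))) := by
    intro r hr
    have hr0 : (0:ℝ) < r := hr.1
    have hrec := recurrence m hm (k * r)
    have hkr : k * r ≠ 0 := by positivity
    have hcc : besselJ ((m:ℝ) - 1) (k * r)
        = besselJDeriv (m:ℝ) (k * r) + (m:ℝ) * besselJ (m:ℝ) (k * r) / (k * r) := by
      field_simp
      linarith [hrec]
    rw [hcc]
    field_simp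
    ring
  have hcong : (∫ r in (0:ℝ)..τ,
        (k ^ 2 * (besselJDeriv m (k * r)) ^ 2 * r + (m : ℝ) ^ 2 * (besselJ m (k * r)) ^ 2 / r))
      = ∫ r in (0:ℝ)..τ,
        (k ^ 2 * (besselJ ((m:ℝ) - 1) (k * r)) ^ 2 * r
          - ((m:ℝ) * (2 * besselJ (m:ℝ) (k * r) ^ 1 * (besselJDeriv (m:ℝ) (k * r) * k)))) := by
    apply intervalIntegral.integral_congr_ae
    refine Filter.Eventually.of_forall (fun r hr => ?_)
    exact hne r (by rwa [Set.uIoc_of_le hτ.le] at hr)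
  rw [hcong, intervalIntegral.integral_sub hint1 hint2, hFTC]
  rw [mul_zero, besselJ_zero_eval m hm]
  have hsplit : (fun r => k ^ 2 * (besselJ ((m:ℝ) - 1) (k * r)) ^ 2 * r)
      = fun r => k ^ 2 * ((besselJ ((m:ℝ) - 1) (k * r)) ^ 2 * r) := by
    funext r; ring
  rw [hsplit, intervalIntegral.integral_const_mul]
  ring
end

section
/- For every integer m ≥ 1, the function x ↦ J_m'(x)/J_m(x) is strictly decreasing on the open interval (0, j_{m,1}); in particular its derivative is ≤ 0 there. -/
open MeasureTheory Filter Set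

namespace BesselAux2

/-- coefficients of the even power series `f` with `J_m(x) = (x/2)^m f(x)` -/
noncomputable def c (m k : ℕ) : ℝ :=
  (-1)^k / ((k.factorial : ℝ) * (m+k).factorial * 4^k)

noncomputable def t0 (m k : ℕ) (x : ℝ) : ℝ := c m k * x^(2*k)
noncomputable def t1 (m k : ℕ) (x : ℝ) : ℝ := c m k * ((2*k : ℕ) * x^(2*k-1))
noncomputable def t2 (m k : ℕ) (x : ℝ) : ℝ :=
  c m k * ((2*k : ℕ) * (((2*k-1 : ℕ) : ℝ) * x^(2*k-1-1)))

lemma abs_c_le (m k : ℕ) : |c m k| ≤ 1 / ((k.factorial : ℝ) * 4^k) := by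
  rw [c, abs_div, abs_pow, abs_neg, abs_one, one_pow,
    abs_of_pos (by positivity)]
  rw [div_le_div_iff₀ (by positivity) (by positivity)]
  have h1 : (1:ℝ) ≤ (m+k).factorial := by exact_mod_cast (m+k).factorial_pos
  have h2 : (0:ℝ) < (k.factorial : ℝ) * 4^k := by positivity
  nlinarith

lemma master_bound (m k d e : ℕ) (x R A : ℝ) (hR : 1 ≤ R) (hx : |x| ≤ R)
    (he : e ≤ 2*k+1) (hA : (d : ℝ) ≤ A * 4^k) :
    |c m k * ((d : ℝ) * x^e)| ≤ (A*R) * (R^2)^k / k.factorial := by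
  have hR0 : 0 ≤ R := le_trans zero_le_one hR
  have hA0 : 0 ≤ A := by
    by_contra h
    push_neg at h
    have : A * 4^k < 0 := mul_neg_of_neg_of_pos h (by positivity)
    have : (0:ℝ) ≤ (d:ℝ) := Nat.cast_nonneg d
    linarith
  have hxe : |x^e| ≤ R^(2*k+1) := by
    rw [abs_pow]
    calc |x|^e ≤ R^e := pow_le_pow_left₀ (abs_nonneg x) hx e
    _ ≤ R^(2*k+1) := pow_le_pow_right₀ hR he
  calc |c m k * ((d : ℝ) * x^e)| = |c m k| * ((d:ℝ) * |x^e|) := by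
        rw [abs_mul, abs_mul, Nat.abs_cast]
  _ ≤ (1 / ((k.factorial : ℝ) * 4^k)) * ((A * 4^k) * R^(2*k+1)) := by
        apply mul_le_mul (abs_c_le m k) ?_ (by positivity) (by positivity)
        apply mul_le_mul hA hxe (abs_nonneg _) (by positivity)
  _ = (A*R) * (R^2)^k / k.factorial := by
        rw [pow_succ, ← pow_mul]
        field_simp

lemma summable_of_bound (a : ℕ → ℝ) (C R : ℝ)
    (h : ∀ k, |a k| ≤ C * R^k / k.factorial) : Summable a := by
  apply Summable.of_norm_bounded (g := fun k => C * R^k / (k.factorial : ℝ)) ?_ h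
  simpa [mul_div_assoc] using (Real.summable_pow_div_factorial R).mul_left C

lemma k_le_4pow (k : ℕ) : (k:ℝ) ≤ 4^k := by
  calc (k:ℝ) ≤ 2^k := by exact_mod_cast (Nat.lt_two_pow_self (n := k)).le
  _ ≤ 4^k := by apply pow_le_pow_left₀ (by norm_num) (by norm_num)

lemma bound_t0 (m k : ℕ) (x R : ℝ) (hR : 1 ≤ R) (hx : |x| ≤ R) :
    |t0 m k x| ≤ (1*R) * (R^2)^k / k.factorial := by
  have := master_bound m k 1 (2*k) x R 1 hR hx (by omega) (by
    simp only [Nat.cast_one, one_mul]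
    exact one_le_pow₀ (by norm_num))
  simpa [t0] using this

lemma bound_t1 (m k : ℕ) (x R : ℝ) (hR : 1 ≤ R) (hx : |x| ≤ R) :
    |t1 m k x| ≤ (2*R) * (R^2)^k / k.factorial := by
  have := master_bound m k (2*k) (2*k-1) x R 2 hR hx (by omega) (by
    push_cast
    nlinarith [k_le_4pow k, pow_pos (show (0:ℝ) < 4 by norm_num) k])
  simpa [t1] using this

lemma bound_t2 (m k : ℕ) (x R : ℝ) (hR : 1 ≤ R) (hx : |x| ≤ R) :
    |t2 m k x| ≤ (4*R) * (R^2)^k / k.factorial := by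
  have := master_bound m k ((2*k) * (2*k-1)) (2*k-1-1) x R 4 hR hx (by omega) (by
    have h1 : ((2*k) * (2*k-1) : ℕ) ≤ 4 * k^2 := by nlinarith [Nat.sub_le (2*k) 1]
    have h2 : (k:ℝ)^2 ≤ (4^k)^2 := by
      apply pow_le_pow_left₀ (Nat.cast_nonneg k) (k_le_4pow k)
    have h4 : ((4:ℝ)^k)^2 = 4^k * 4^k := by ring
    have h2 : (k:ℝ)^2 ≤ 4^k := by
      calc (k:ℝ)^2 ≤ ((2:ℝ)^k)^2 := by
            apply pow_le_pow_left₀ (Nat.cast_nonneg k)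
            exact_mod_cast (Nat.lt_two_pow_self (n := k)).le
      _ = 4^k := by rw [← pow_mul, mul_comm, pow_mul]; norm_num
    calc (((2*k) * (2*k-1) : ℕ) : ℝ) ≤ ((4 * k^2 : ℕ) : ℝ) := by exact_mod_cast h1
    _ = 4 * (k:ℝ)^2 := by push_cast; ring
    _ ≤ 4 * 4^k := by nlinarith)
  have he : t2 m k x = c m k * ((((2*k) * (2*k-1) : ℕ) : ℝ) * x ^ (2*k-1-1)) := by
    rw [t2]; push_cast; ring
  rw [he]; exact this

noncomputable def f (m : ℕ) (x : ℝ) : ℝ := ∑' k, t0 m k x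
noncomputable def f1 (m : ℕ) (x : ℝ) : ℝ := ∑' k, t1 m k x
noncomputable def f2 (m : ℕ) (x : ℝ) : ℝ := ∑' k, t2 m k x

lemma summable_t0 (m : ℕ) (x : ℝ) : Summable (fun k => t0 m k x) :=
  summable_of_bound _ (1*(|x|+1)) ((|x|+1)^2) fun k =>
    bound_t0 m k x (|x|+1) (by nlinarith [abs_nonneg x]) (by nlinarith [abs_nonneg x])

lemma summable_t1 (m : ℕ) (x : ℝ) : Summable (fun k => t1 m k x) :=
  summable_of_bound _ (2*(|x|+1)) ((|x|+1)^2) fun k =>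
    bound_t1 m k x (|x|+1) (by nlinarith [abs_nonneg x]) (by nlinarith [abs_nonneg x])

lemma summable_t2 (m : ℕ) (x : ℝ) : Summable (fun k => t2 m k x) :=
  summable_of_bound _ (4*(|x|+1)) ((|x|+1)^2) fun k =>
    bound_t2 m k x (|x|+1) (by nlinarith [abs_nonneg x]) (by nlinarith [abs_nonneg x])

lemma hasDerivAt_t0 (m k : ℕ) (x : ℝ) : HasDerivAt (t0 m k) (t1 m k x) x := by
  have := (hasDerivAt_pow (2*k) x).const_mul (c m k)
  have ht0 : t0 m k = fun y => c m k * y^(2*k) := rfl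
  rw [ht0]
  simpa [t1] using this

lemma hasDerivAt_t1 (m k : ℕ) (x : ℝ) : HasDerivAt (t1 m k) (t2 m k x) x := by
  have := (hasDerivAt_pow (2*k-1) x).const_mul (c m k * (2*k : ℕ))
  have he : t1 m k = fun y => (c m k * (2*k : ℕ)) * y^(2*k-1) := by
    funext y; rw [t1]; ring
  rw [he, t2]
  refine this.congr_deriv ?_
  ring

lemma hasDerivAt_f (m : ℕ) (x : ℝ) : HasDerivAt (f m) (f1 m x) x := by
  have hR : (1:ℝ) ≤ |x| + 1 := by nlinarith [abs_nonneg x]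
  apply hasDerivAt_tsum_of_isPreconnected
    (u := fun k => (2*(|x|+1)) * ((|x|+1)^2)^k / k.factorial)
    ?_ (Metric.isOpen_ball (x := (0:ℝ)) (ε := |x|+1)) (convex_ball _ _).isPreconnected
    (fun k y _ => hasDerivAt_t0 m k y) ?_ ?_ (summable_t0 m x) ?_
  · apply summable_of_bound _ (2*(|x|+1)) ((|x|+1)^2)
    intro k
    rw [abs_of_pos (by positivity)]
  · intro k y hy
    rw [Real.norm_eq_abs]
    apply bound_t1 m k y _ hR
    rw [Metric.mem_ball, Real.dist_eq, sub_zero] at hy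
    exact hy.le
  · simp [Metric.mem_ball, Real.dist_eq]
  · simp [Metric.mem_ball, Real.dist_eq]

lemma hasDerivAt_f1 (m : ℕ) (x : ℝ) : HasDerivAt (f1 m) (f2 m x) x := by
  have hR : (1:ℝ) ≤ |x| + 1 := by nlinarith [abs_nonneg x]
  apply hasDerivAt_tsum_of_isPreconnected
    (u := fun k => (4*(|x|+1)) * ((|x|+1)^2)^k / k.factorial)
    ?_ (Metric.isOpen_ball (x := (0:ℝ)) (ε := |x|+1)) (convex_ball _ _).isPreconnected
    (fun k y _ => hasDerivAt_t1 m k y) ?_ ?_ (summable_t1 m x) ?_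
  · apply summable_of_bound _ (4*(|x|+1)) ((|x|+1)^2)
    intro k
    rw [abs_of_pos (by positivity)]
  · intro k y hy
    rw [Real.norm_eq_abs]
    apply bound_t2 m k y _ hR
    rw [Metric.mem_ball, Real.dist_eq, sub_zero] at hy
    exact hy.le
  · simp [Metric.mem_ball, Real.dist_eq]
  · simp [Metric.mem_ball, Real.dist_eq]

lemma c_succ (m k : ℕ) : c m (k+1) * (4*(k+1)*(m+k+1)) = - c m k := by
  have h1 : (k+1).factorial = (k+1) * k.factorial := Nat.factorial_succ k
  have h2 : (m+(k+1)).factorial = (m+k+1) * (m+k).factorial := by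
    rw [show m+(k+1) = (m+k)+1 by ring, Nat.factorial_succ]
  have hk : ((k.factorial : ℝ)) ≠ 0 := Nat.cast_ne_zero.2 k.factorial_ne_zero
  have hmk : (((m+k).factorial : ℝ)) ≠ 0 := Nat.cast_ne_zero.2 (m+k).factorial_ne_zero
  rw [c, c, h1, h2]
  push_cast
  field_simp
  ring

lemma summable_b (m : ℕ) (x : ℝ) : Summable (fun k => c m k * x^(2*k+1)) := by
  apply summable_of_bound _ (1*(|x|+1)) ((|x|+1)^2)
  intro k
  have := master_bound m k 1 (2*k+1) x (|x|+1) 1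
    (by nlinarith [abs_nonneg x]) (by nlinarith [abs_nonneg x]) (le_refl _)
    (by simp only [Nat.cast_one, one_mul]; exact one_le_pow₀ (by norm_num))
  simpa using this

lemma key_identity (m : ℕ) (x : ℝ) :
    x * f2 m x + (2*m+1) * f1 m x + x * f m x = 0 := by
  set b : ℕ → ℝ := fun k => c m k * x^(2*k+1) with hbdef
  set S : ℕ → ℝ := fun k => x * t2 m k x + ((2*m+1) * t1 m k x + x * t0 m k x) with hSdef
  have hs0 := summable_t0 m x
  have hs1 := summable_t1 m x
  have hs2 := summable_t2 m x
  have hb := summable_b m x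
  have hSsum : Summable S := ((hs2.mul_left x).add ((hs1.mul_left _).add (hs0.mul_left x)))
  have hS0 : S 0 = b 0 := by
    simp [hSdef, hbdef, t0, t1, t2, mul_comm]
  have hSsucc : ∀ k, S (k+1) = b (k+1) - b k := by
    intro k
    have hc := c_succ m k
    have e1 : 2*(k+1)-1-1 = 2*k := by omega
    have e2 : 2*(k+1)-1 = 2*k+1 := by omega
    simp only [hSdef, hbdef, t0, t1, t2, e1, e2]
    push_cast
    linear_combination (x^(2*k+1)) * hc
  have step1 : x * f2 m x + (2*m+1) * f1 m x + x * f m x = ∑' k, S k := by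
    rw [f, f1, f2, ← tsum_mul_left, ← tsum_mul_left, ← tsum_mul_left, add_assoc,
      ← Summable.tsum_add (hs1.mul_left ((2*m+1:ℝ))) (hs0.mul_left x),
      ← Summable.tsum_add (hs2.mul_left x) ((hs1.mul_left ((2*m+1:ℝ))).add (hs0.mul_left x))]
  have hbshift : Summable (fun k => b (k+1)) := by
    rw [← summable_nat_add_iff 1] at hb
    exact hb
  have step2 : ∑' k, S k = b 0 + (∑' k, b (k+1) - ∑' k, b k) := by
    rw [Summable.tsum_eq_zero_add hSsum, hS0]
    congr 1
    rw [← Summable.tsum_sub hbshift hb]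
    exact tsum_congr fun k => hSsucc k
  have step3 : ∑' k, b k = b 0 + ∑' k, b (k+1) := Summable.tsum_eq_zero_add hb
  rw [step1, step2]
  linarith
lemma besselJ_eq (m : ℕ) (x : ℝ) (hx : 0 < x) :
    besselJ m x = (x/2)^m * f m x := by
  rw [besselJ, f, ← tsum_mul_left]
  apply tsum_congr
  intro k
  have hg : Real.Gamma ((m:ℝ) + (k:ℝ) + 1) = ((m+k).factorial : ℝ) := by
    rw [show ((m:ℝ) + (k:ℝ)) = ((m+k : ℕ) : ℝ) by push_cast; ring]
    exact Real.Gamma_nat_eq_factorial (m+k)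
  have hx2 : (0:ℝ) < x/2 := by linarith
  have hrpow : (x/2) ^ (2 * (k:ℝ) + (m:ℝ)) = (x/2) ^ (2*k+m : ℕ) := by
    rw [show (2 * (k:ℝ) + (m:ℝ)) = ((2*k+m : ℕ) : ℝ) by push_cast; ring,
      Real.rpow_natCast]
  rw [hg, hrpow, t0, c, pow_add, pow_mul]
  have h4 : ((x/2)^2)^k = x^(2*k) / 4^k := by
    rw [show (x/2)^2 = x^2/4 by ring, div_pow, ← pow_mul]
  rw [h4]
  have hk : ((k.factorial : ℝ)) ≠ 0 := Nat.cast_ne_zero.2 k.factorial_ne_zero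
  have hmk : (((m+k).factorial : ℝ)) ≠ 0 := Nat.cast_ne_zero.2 (m+k).factorial_ne_zero
  field_simp

lemma hasDerivAt_Jt (m : ℕ) (x : ℝ) :
    HasDerivAt (fun y => (y/2)^m * f m y)
      ((m:ℝ) * (x/2)^(m-1) * (1/2) * f m x + (x/2)^m * f1 m x) x := by
  have h1 : HasDerivAt (fun y : ℝ => (y/2)^m) ((m:ℝ) * (x/2)^(m-1) * (1/2)) x := by
    have := (hasDerivAt_pow m (x/2)).comp x ((hasDerivAt_id x).div_const 2)
    simpa [Function.comp_def] using this
  exact h1.mul (hasDerivAt_f m x)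

lemma besselJ_eventually (m : ℕ) (x : ℝ) (hx : 0 < x) :
    besselJ m =ᶠ[nhds x] (fun y => (y/2)^m * f m y) :=
  eventually_of_mem (Ioi_mem_nhds hx) (fun y hy => besselJ_eq m y hy)

lemma besselJDeriv_eq (m : ℕ) (x : ℝ) (hx : 0 < x) :
    besselJDeriv m x = (m:ℝ) * (x/2)^(m-1) * (1/2) * f m x + (x/2)^m * f1 m x := by
  rw [besselJDeriv, (besselJ_eventually m x hx).deriv_eq]
  exact (hasDerivAt_Jt m x).deriv

lemma ratio_eq (m : ℕ) (hm : 1 ≤ m) (x : ℝ) (hx : 0 < x) (hf : f m x ≠ 0) :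
    besselJDeriv m x / besselJ m x = (m:ℝ) / x + f1 m x / f m x := by
  obtain ⟨n, rfl⟩ : ∃ n, m = n + 1 := ⟨m-1, by omega⟩
  rw [besselJDeriv_eq _ x hx, besselJ_eq _ x hx]
  have hxne : x ≠ 0 := ne_of_gt hx
  have hpne : (x/2)^n ≠ 0 := pow_ne_zero n (div_ne_zero hxne two_ne_zero)
  simp only [Nat.add_sub_cancel, pow_succ]
  field_simp

lemma f_zero_val (m : ℕ) : f m 0 = c m 0 := by
  rw [f]
  rw [tsum_eq_single 0]
  · simp [t0]
  · intro k hk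
    simp [t0, zero_pow (show 2*k ≠ 0 by omega)]

lemma c_zero_pos (m : ℕ) : 0 < c m 0 := by
  rw [c]
  simp
  positivity

lemma besselJZero_one (m : ℕ) :
    besselJZero m 1 = sInf {x : ℝ | 0 < x ∧ besselJ m x = 0} := by
  rfl

lemma besselJ_ne_zero_on (m : ℕ) (x : ℝ) (hx : x ∈ Ioo 0 (besselJZero m 1)) :
    besselJ m x ≠ 0 := by
  intro h
  have hb : BddBelow {y : ℝ | 0 < y ∧ besselJ m y = 0} :=
    ⟨0, fun y hy => hy.1.le⟩
  have := csInf_le hb (Set.mem_setOf.2 ⟨hx.1, h⟩)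
  rw [← besselJZero_one] at this
  exact absurd hx.2 (not_lt.2 this)

lemma f_cont (m : ℕ) : Continuous (f m) := by
  have : Differentiable ℝ (f m) := fun x => (hasDerivAt_f m x).differentiableAt
  exact this.continuous

lemma f_pos (m : ℕ) (x : ℝ) (hx : x ∈ Ioo 0 (besselJZero m 1)) : 0 < f m x := by
  have hne : f m x ≠ 0 := by
    intro h
    apply besselJ_ne_zero_on m x hx
    rw [besselJ_eq m x hx.1, h, mul_zero]
  rcases hne.lt_or_gt with hneg | hpos
  · exfalso
    have h0 : 0 < f m 0 := by rw [f_zero_val]; exact c_zero_pos m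
    have : (0:ℝ) ∈ Ioo (f m x) (f m 0) := ⟨hneg, h0⟩
    obtain ⟨y, hy, hfy⟩ := intermediate_value_Ioo' hx.1.le (f_cont m).continuousOn this
    have hyI : y ∈ Ioo 0 (besselJZero m 1) := ⟨hy.1, hy.2.trans hx.2⟩
    apply besselJ_ne_zero_on m y hyI
    rw [besselJ_eq m y hy.1, hfy, mul_zero]
  · exact hpos


lemma f_zero_pos (m : ℕ) : 0 < f m 0 := by
  rw [f_zero_val]; exact c_zero_pos m

-- φ t = 0 in fraction form → polynomial form
lemma alg0 (t P Q v : ℝ) (hP : P ≠ 0)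
    (h : (t*Q/P)^2 + (2*v+1)*(t*Q/P) + v + t^2 = 0) :
    t^2*Q^2 + (2*v+1)*t*Q*P + v*P^2 + t^2*P^2 = 0 := by
  field_simp at h
  linear_combination h

-- simplification of derivative of w at a zero of φ
lemma alg1 (t P Q S v : ℝ) (ht : t ≠ 0) (hP : P ≠ 0)
    (hid : t*S + (2*v+1)*Q + t*P = 0)
    (hA : t^2*Q^2 + (2*v+1)*t*Q*P + v*P^2 + t^2*P^2 = 0) :
    ((1*Q + t*S)*P - t*Q*Q)/P^2 = (t*Q/P + v)/t := by
  have hS : S = (-((2*v+1)*Q) - t*P)/t := by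
    field_simp
    linear_combination hid
  rw [hS]
  field_simp
  linear_combination -hA

-- positivity of derivative of φ at its first zero
lemma alg2 (t v ww : ℝ) (ht : 0 < t) (hv : 1 ≤ v)
    (hA' : ww^2 + (2*v+1)*ww + v + t^2 = 0) :
    0 < 2*ww*((ww+v)/t) + (2*v+1)*((ww+v)/t) + 2*t := by
  have h1 : 2*ww*((ww+v)/t) + (2*v+1)*((ww+v)/t) + 2*t
      = ((ww+v)^2 + v^2 + t^2)/t := by
    field_simp
    linear_combination hA'
  rw [h1]
  apply div_pos ?_ ht
  nlinarith [sq_nonneg (ww+v)]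

-- value of the derivative of the quotient
lemma alg3 (t P Q S v : ℝ) (ht : t ≠ 0) (hP : P ≠ 0)
    (hid : t*S + (2*v+1)*Q + t*P = 0) :
    v * (-(t^2)⁻¹) + (S*P - Q*Q)/P^2
      = -((t*Q/P)^2 + (2*v+1)*(t*Q/P) + v + t^2)/t^2 := by
  have hS : S = (-((2*v+1)*Q) - t*P)/t := by
    field_simp
    linear_combination hid
  rw [hS]
  field_simp
  ring

-- one-sided derivative sign
lemma deriv_nonpos_left {g : ℝ → ℝ} {L t a : ℝ} (h : HasDerivAt g L t) (ha : a < t)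
    (hg : ∀ y, a < y → y < t → g t ≤ g y) : L ≤ 0 := by
  have h' := (h.hasDerivWithinAt (s := Iio t))
  rw [hasDerivWithinAt_iff_tendsto_slope] at h'
  have hset : Iio t \ {t} = Iio t := by
    ext y; simp (config := {contextual := true}) [ne_of_lt]
  rw [hset] at h'
  have hmem : Ioo a t ∈ nhdsWithin t (Iio t) :=
    Ioo_mem_nhdsLT_of_mem ⟨ha, le_refl t⟩
  refine le_of_tendsto h' ?_
  filter_upwards [hmem] with y hy
  rw [slope_def_field]
  have h1 : g t ≤ g y := hg y hy.1 hy.2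
  have h2 : y - t < 0 := by linarith [hy.2]
  exact div_nonpos_iff.2 (Or.inl ⟨by linarith, by linarith⟩)

noncomputable def wf (m : ℕ) (y : ℝ) : ℝ := y * f1 m y / f m y
noncomputable def phi (m : ℕ) (y : ℝ) : ℝ :=
  wf m y^2 + (2*(m:ℝ)+1) * wf m y + (m:ℝ) + y^2

lemma f1_cont (m : ℕ) : Continuous (f1 m) :=
  Differentiable.continuous (fun x => (hasDerivAt_f1 m x).differentiableAt)

lemma phi_contAt (m : ℕ) (y : ℝ) (hf : f m y ≠ 0) : ContinuousAt (phi m) y := by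
  have hw : ContinuousAt (wf m) y :=
    (continuousAt_id.mul (f1_cont m).continuousAt).div (f_cont m).continuousAt hf
  exact ((((hw.pow 2).add (hw.const_mul _)).add continuousAt_const).add
    ((continuousAt_id).pow 2))

lemma hasDerivAt_wf (m : ℕ) (t : ℝ) (hf : f m t ≠ 0) :
    HasDerivAt (wf m) (((1 * f1 m t + t * f2 m t) * f m t - t * f1 m t * f1 m t)
      / (f m t)^2) t :=
  ((hasDerivAt_id t).mul (hasDerivAt_f1 m t)).div (hasDerivAt_f m t) hf

lemma phi_pos (m : ℕ) (hm : 1 ≤ m) (x : ℝ) (hx : x ∈ Ioo 0 (besselJZero m 1)) :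
    0 < phi m x := by
  by_contra hcon
  push_neg at hcon
  set z := besselJZero (m:ℝ) 1 with hz
  -- positivity of φ near 0
  have hf0 : f m 0 ≠ 0 := (f_zero_pos m).ne'
  have hphi0 : 0 < phi m 0 := by
    have : phi m 0 = m := by simp [phi, wf]
    rw [this]
    exact_mod_cast Nat.pos_of_ne_zero (by omega)
  have hev : {y : ℝ | 0 < phi m y} ∈ nhds 0 :=
    (phi_contAt m 0 hf0).preimage_mem_nhds (Ioi_mem_nhds hphi0)
  obtain ⟨δ₀, hδ₀pos, hδ₀⟩ := Metric.mem_nhds_iff.1 hev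
  have hδ₀' : ∀ y : ℝ, |y| < δ₀ → 0 < phi m y := by
    intro y hy
    exact hδ₀ (by simpa [Real.dist_eq] using hy)
  -- the bad point is ≥ δ₀
  have hx₀δ : δ₀ ≤ x := by
    by_contra h
    push_neg at h
    exact absurd (hδ₀' x (by rw [abs_of_pos hx.1]; exact h)) (not_lt.2 hcon)
  set δ : ℝ := δ₀/2 with hδdef
  have hδpos : 0 < δ := by positivity
  have hδx : δ < x := by linarith
  have hIcc_sub : Icc δ x ⊆ Ioo 0 z := fun y hy => ⟨lt_of_lt_of_le hδpos hy.1,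
    lt_of_le_of_lt hy.2 hx.2⟩
  have hφcontOn : ContinuousOn (phi m) (Icc δ x) := fun y hy =>
    (phi_contAt m y (f_pos m y (hIcc_sub hy)).ne').continuousWithinAt
  set K := {y : ℝ | y ∈ Icc δ x ∧ phi m y ≤ 0} with hK
  have hKcl : IsClosed K := by
    have : K = Icc δ x ∩ phi m ⁻¹' (Iic 0) := rfl
    rw [this]
    exact hφcontOn.preimage_isClosed_of_isClosed isClosed_Icc isClosed_Iic
  have hKne : x ∈ K := ⟨⟨hδx.le, le_refl x⟩, hcon⟩
  have hKbdd : BddBelow K := ⟨δ, fun y hy => hy.1.1⟩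
  set t := sInf K with htdef
  have htK : t ∈ K := hKcl.csInf_mem ⟨x, hKne⟩ hKbdd
  have htI : t ∈ Ioo 0 z := hIcc_sub htK.1
  have hft : f m t ≠ 0 := (f_pos m t htI).ne'
  have hδt : δ < t := by
    rcases lt_or_eq_of_le htK.1.1 with h | h
    · exact h
    · exfalso
      have : 0 < phi m t := hδ₀' t (by rw [abs_of_pos htI.1, ← h]; linarith)
      exact absurd this (not_lt.2 htK.2)
  have hbefore : ∀ y, 0 < y → y < t → 0 < phi m y := by
    intro y hy0 hyt
    by_cases hyδ : y < δ
    · exact hδ₀' y (by rw [abs_of_pos hy0]; linarith)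
    · push_neg at hyδ
      by_contra hc
      push_neg at hc
      have hyK : y ∈ K := ⟨⟨hyδ, le_of_lt (lt_of_lt_of_le hyt htK.1.2)⟩, hc⟩
      exact absurd (csInf_le hKbdd hyK) (not_le.2 hyt)
  have hφt : phi m t = 0 := by
    rcases lt_or_eq_of_le htK.2 with h | h
    · exfalso
      have hδφ : 0 < phi m δ := hδ₀' δ (by rw [abs_of_pos hδpos]; linarith)
      have : (0:ℝ) ∈ Ioo (phi m t) (phi m δ) := ⟨h, hδφ⟩
      obtain ⟨y, hy, hfy⟩ := intermediate_value_Ioo' hδt.le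
        (hφcontOn.mono (Icc_subset_Icc (le_refl δ) htK.1.2)) this
      exact absurd (hfy ▸ hbefore y (lt_trans hδpos hy.1) hy.2) (lt_irrefl 0)
    · exact h
  -- derivative of φ at t
  have hid : t * f2 m t + (2*(m:ℝ)+1) * f1 m t + t * f m t = 0 := by
    have := key_identity m t
    push_cast at this ⊢
    linarith
  have hid' : t * f2 m t + (2*(m:ℝ)+1) * f1 m t + t * f m t = 0 := hid
  have hA : t^2*(f1 m t)^2 + (2*(m:ℝ)+1)*t*(f1 m t)*(f m t) + (m:ℝ)*(f m t)^2
      + t^2*(f m t)^2 = 0 := by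
    apply alg0 t (f m t) (f1 m t) (m:ℝ) hft
    have := hφt
    rw [phi, wf] at this
    linear_combination this
  have hw2 : HasDerivAt (wf m) ((wf m t + (m:ℝ))/t) t := by
    have h := hasDerivAt_wf m t hft
    convert h using 1
    rw [alg1 t (f m t) (f1 m t) (f2 m t) (m:ℝ) htI.1.ne' hft (by linarith) hA, wf]
  have hφd : HasDerivAt (phi m)
      (2*(wf m t)*((wf m t + (m:ℝ))/t) + (2*(m:ℝ)+1)*((wf m t + (m:ℝ))/t) + 2*t) t := by
    have h := (((hw2.pow 2).add (hw2.const_mul (2*(m:ℝ)+1))).add_const (m:ℝ)).add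
      (hasDerivAt_pow 2 t)
    have hfn : phi m = fun y => ((wf m y^2 + (2*(m:ℝ)+1) * wf m y) + (m:ℝ)) + y^2 := rfl
    rw [hfn]
    refine h.congr_deriv ?_
    push_cast
    ring
  have hL0 : (2*(wf m t)*((wf m t + (m:ℝ))/t) + (2*(m:ℝ)+1)*((wf m t + (m:ℝ))/t) + 2*t)
      ≤ 0 := by
    apply deriv_nonpos_left hφd hδt
    intro y hy1 hy2
    rw [hφt]
    exact (hbefore y (lt_trans hδpos hy1) hy2).le
  have hL1 : 0 < 2*(wf m t)*((wf m t + (m:ℝ))/t) + (2*(m:ℝ)+1)*((wf m t + (m:ℝ))/t)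
      + 2*t := by
    apply alg2 t (m:ℝ) (wf m t) htI.1 (by exact_mod_cast hm)
    have := hφt
    rw [phi] at this
    linarith
  linarith


end BesselAux2

open BesselAux2 in
/-- For every integer `m ≥ 1`, `x ↦ J_m'(x)/J_m(x)` is strictly decreasing on
`(0, j_{m,1})`; in particular its derivative is `≤ 0` there. -/
theorem stmt2 (m : ℕ) (hm : 1 ≤ m) :
    StrictAntiOn (fun x : ℝ => besselJDeriv m x / besselJ m x)
      (Set.Ioo 0 (besselJZero m 1)) ∧
    ∀ x ∈ Set.Ioo (0:ℝ) (besselJZero m 1),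
      deriv (fun x : ℝ => besselJDeriv m x / besselJ m x) x ≤ 0 := by
  have hmain : ∀ x ∈ Set.Ioo (0:ℝ) (besselJZero m 1),
      deriv (fun x : ℝ => besselJDeriv m x / besselJ m x) x < 0 := by
    intro x hx
    have hfx : f m x ≠ 0 := (f_pos m x hx).ne'
    have hxne : x ≠ 0 := hx.1.ne'
    have hev : (fun y : ℝ => besselJDeriv m y / besselJ m y) =ᶠ[nhds x]
        (fun y => (m:ℝ) * y⁻¹ + f1 m y / f m y) := by
      filter_upwards [isOpen_Ioo.mem_nhds hx] with y hy
      rw [ratio_eq m hm y hy.1 (f_pos m y hy).ne', div_eq_mul_inv]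
    have hRd : HasDerivAt (fun y => (m:ℝ) * y⁻¹ + f1 m y / f m y)
        ((m:ℝ) * (-(x^2)⁻¹) + ((f2 m x * f m x - f1 m x * f1 m x)/(f m x)^2)) x :=
      ((hasDerivAt_inv hxne).const_mul (m:ℝ)).add
        ((hasDerivAt_f1 m x).div (hasDerivAt_f m x) hfx)
    rw [hev.deriv_eq, hRd.deriv]
    have hid : x * f2 m x + (2*(m:ℝ)+1) * f1 m x + x * f m x = 0 := by
      have := key_identity m x; push_cast at this ⊢; linarith
    rw [alg3 x (f m x) (f1 m x) (f2 m x) (m:ℝ) hxne hfx (by linarith)]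
    have hφ := phi_pos m hm x hx
    rw [phi, wf] at hφ
    apply div_neg_of_neg_of_pos _ (pow_pos hx.1 2)
    linarith
  constructor
  · apply strictAntiOn_of_deriv_neg (convex_Ioo 0 (besselJZero m 1))
    · have hcont : ContinuousOn (fun y => (m:ℝ) * y⁻¹ + f1 m y / f m y)
          (Set.Ioo 0 (besselJZero m 1)) := by
        intro u hu
        have hfu : f m u ≠ 0 := (f_pos m u hu).ne'
        exact (((hasDerivAt_inv hu.1.ne').const_mul (m:ℝ)).add
          ((hasDerivAt_f1 m u).div (hasDerivAt_f m u) hfu)).continuousAt.continuousWithinAt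
      refine hcont.congr fun u hu => ?_
      show besselJDeriv m u / besselJ m u = _
      rw [ratio_eq m hm u hu.1 (f_pos m u hu).ne', div_eq_mul_inv]
    · intro x hx
      rw [interior_Ioo] at hx
      exact hmain x hx
  · intro x hx
    exact (hmain x hx).le
end

section
/- For every integer m ≥ 1 and every real x with 0 < x ≤ 1, one has the chain of strict inequalities 0 < x m/(2m+2) < J_{m+1}(m x)/J_m(m x) < x m/(m+2) < 1. -/
open MeasureTheory Filter Set

noncomputable def gb (n : ℕ) (u : ℝ) : ℝ :=
  ∑' k : ℕ, ((-1 : ℝ) ^ k / ((k.factorial : ℝ) * ((n + k).factorial : ℝ))) * u ^ k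

lemma gb_term_bound (n k : ℕ) (u : ℝ) :
    ‖((-1 : ℝ) ^ k / ((k.factorial : ℝ) * ((n + k).factorial : ℝ))) * u ^ k‖
      ≤ |u| ^ k / (k.factorial : ℝ) := by
  have h1 : (1:ℝ) ≤ ((n + k).factorial : ℝ) := by exact_mod_cast Nat.one_le_iff_ne_zero.mpr (Nat.factorial_ne_zero _)
  have hk : (0:ℝ) < (k.factorial : ℝ) := by exact_mod_cast Nat.factorial_pos k
  rw [norm_mul, norm_div, norm_pow, norm_neg, norm_one, one_pow, norm_mul, norm_pow]
  simp only [Real.norm_natCast, Real.norm_eq_abs, one_div]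
  rw [abs_of_nonneg hk.le, abs_of_nonneg (by positivity : (0:ℝ) ≤ ((n + k).factorial : ℝ)),
    inv_mul_eq_div]
  gcongr
  exact le_mul_of_one_le_right hk.le h1

lemma gb_summable (n : ℕ) (u : ℝ) :
    Summable (fun k : ℕ => ((-1 : ℝ) ^ k / ((k.factorial : ℝ) * ((n + k).factorial : ℝ))) * u ^ k) :=
  Summable.of_norm_bounded (Real.summable_pow_div_factorial |u|) (fun k => gb_term_bound n k u)

lemma deriv_term_bound (n k : ℕ) {R y : ℝ} (hR : 0 ≤ R) (hy : |y| ≤ R) :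
    ‖((-1 : ℝ) ^ k / ((k.factorial : ℝ) * ((n + k).factorial : ℝ))) * ((k : ℝ) * y ^ (k - 1))‖
      ≤ (k : ℝ) * R ^ (k - 1) / (k.factorial : ℝ) := by
  have h1 : (1:ℝ) ≤ ((n + k).factorial : ℝ) := by
    exact_mod_cast Nat.one_le_iff_ne_zero.mpr (Nat.factorial_ne_zero _)
  have hk : (0:ℝ) < (k.factorial : ℝ) := by exact_mod_cast Nat.factorial_pos k
  rw [norm_mul, norm_div, norm_pow, norm_neg, norm_one, one_pow, norm_mul, norm_mul, norm_pow]
  simp only [Real.norm_natCast, Real.norm_eq_abs, one_div]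
  rw [abs_of_nonneg hk.le, abs_of_nonneg (by positivity : (0:ℝ) ≤ ((n + k).factorial : ℝ)),
    inv_mul_eq_div, Nat.abs_cast]
  gcongr
  exact le_mul_of_one_le_right hk.le h1

lemma summable_deriv_bound {R : ℝ} (hR : 0 ≤ R) :
    Summable (fun k : ℕ => (k : ℝ) * R ^ (k - 1) / (k.factorial : ℝ)) := by
  rw [← summable_nat_add_iff 1]
  have : (fun j : ℕ => ((j + 1 : ℕ) : ℝ) * R ^ ((j + 1) - 1) / (((j + 1).factorial : ℝ)))
      = fun j : ℕ => R ^ j / (j.factorial : ℝ) := by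
    funext j
    have hj : (0:ℝ) < (j.factorial : ℝ) := by exact_mod_cast Nat.factorial_pos j
    rw [Nat.add_sub_cancel, Nat.factorial_succ]
    push_cast
    field_simp
  rw [this]
  exact Real.summable_pow_div_factorial R

lemma gb_deriv_summable (n : ℕ) (y : ℝ) :
    Summable (fun k : ℕ =>
      ((-1 : ℝ) ^ k / ((k.factorial : ℝ) * ((n + k).factorial : ℝ))) * ((k : ℝ) * y ^ (k - 1))) :=
  Summable.of_norm_bounded (summable_deriv_bound (abs_nonneg y))
    (fun k => deriv_term_bound n k (abs_nonneg y) le_rfl)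

lemma gb_deriv_sum (n : ℕ) (y : ℝ) :
    ∑' k : ℕ, ((-1 : ℝ) ^ k / ((k.factorial : ℝ) * ((n + k).factorial : ℝ)))
        * ((k : ℝ) * y ^ (k - 1)) = -(gb (n+1) y) := by
  rw [Summable.tsum_eq_zero_add (gb_deriv_summable n y)]
  have h0 : ((-1 : ℝ) ^ 0 / (((0:ℕ).factorial : ℝ) * ((n + 0).factorial : ℝ)))
      * (((0:ℕ) : ℝ) * y ^ (0 - 1)) = 0 := by simp
  rw [h0, zero_add]
  have key : ∀ j : ℕ, ((-1 : ℝ) ^ (j+1) / (((j+1).factorial : ℝ) * ((n + (j+1)).factorial : ℝ)))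
      * (((j+1 : ℕ) : ℝ) * y ^ ((j+1) - 1))
      = -(((-1 : ℝ) ^ j / ((j.factorial : ℝ) * (((n+1) + j).factorial : ℝ))) * y ^ j) := by
    intro j
    have e1 : n + (j+1) = (n+1) + j := by omega
    have hj : (0:ℝ) < (j.factorial : ℝ) := by exact_mod_cast Nat.factorial_pos j
    have hnj : (0:ℝ) < (((n+1) + j).factorial : ℝ) := by exact_mod_cast Nat.factorial_pos _
    rw [e1, Nat.add_sub_cancel, Nat.factorial_succ, pow_succ]
    push_cast
    field_simp
  simp_rw [key]
  rw [tsum_neg]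
  rfl

lemma gb_hasDerivAt (n : ℕ) (u : ℝ) : HasDerivAt (gb n) (-(gb (n+1) u)) u := by
  set R : ℝ := |u| + 1 with hRdef
  have hR : (0:ℝ) ≤ R := by positivity
  have huIoo : u ∈ Ioo (-R) R := by
    constructor <;> [nlinarith [neg_abs_le u]; nlinarith [le_abs_self u]]
  have H := hasDerivAt_tsum_of_isPreconnected
    (g := fun (k : ℕ) (y : ℝ) =>
      ((-1 : ℝ) ^ k / ((k.factorial : ℝ) * ((n + k).factorial : ℝ))) * y ^ k)
    (g' := fun (k : ℕ) (y : ℝ) =>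
      ((-1 : ℝ) ^ k / ((k.factorial : ℝ) * ((n + k).factorial : ℝ))) * ((k : ℝ) * y ^ (k - 1)))
    (u := fun k : ℕ => (k : ℝ) * R ^ (k - 1) / (k.factorial : ℝ))
    (summable_deriv_bound hR) isOpen_Ioo (convex_Ioo (-R) R).isPreconnected
    (fun k y _ => (hasDerivAt_pow k y).const_mul _)
    (fun k y hy => deriv_term_bound n k hR (by
      rw [abs_le]; exact ⟨hy.1.le, hy.2.le⟩))
    huIoo (gb_summable n u) huIoo
  rw [gb_deriv_sum n u] at H
  exact H

lemma gb_continuous (n : ℕ) : Continuous (gb n) := by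
  have : Differentiable ℝ (gb n) := fun u => (gb_hasDerivAt n u).differentiableAt
  exact this.continuous

lemma gb_zero (n : ℕ) : gb n 0 = 1 / (n.factorial : ℝ) := by
  unfold gb
  rw [tsum_eq_single 0]
  · simp
  · intro k hk
    rw [zero_pow hk, mul_zero]

lemma gb_rec (n : ℕ) (u : ℝ) :
    gb n u = ((n:ℝ)+1) * gb (n+1) u - u * gb (n+2) u := by
  have h1 : ((n:ℝ)+1) * gb (n+1) u - gb n u = u * gb (n+2) u := by
    have hs1 : Summable (fun k : ℕ =>
        ((n:ℝ)+1) * (((-1 : ℝ) ^ k / ((k.factorial : ℝ) * (((n+1) + k).factorial : ℝ))) * u ^ k)) :=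
      (gb_summable (n+1) u).mul_left _
    have hs2 := gb_summable n u
    have hsub := hs1.sub hs2
    have e1 : ((n:ℝ)+1) * gb (n+1) u - gb n u
        = ∑' k : ℕ, (((n:ℝ)+1) * (((-1 : ℝ) ^ k / ((k.factorial : ℝ) * (((n+1) + k).factorial : ℝ))) * u ^ k)
          - ((-1 : ℝ) ^ k / ((k.factorial : ℝ) * ((n + k).factorial : ℝ))) * u ^ k) := by
      rw [Summable.tsum_sub hs1 hs2]
      unfold gb
      rw [← tsum_mul_left]
    rw [e1, Summable.tsum_eq_zero_add hsub]
    have h0 : ((n:ℝ)+1) * (((-1 : ℝ) ^ 0 / (((0:ℕ).factorial : ℝ) * (((n+1) + 0).factorial : ℝ))) * u ^ 0)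
        - ((-1 : ℝ) ^ 0 / (((0:ℕ).factorial : ℝ) * ((n + 0).factorial : ℝ))) * u ^ 0 = 0 := by
      have : ((n+1).factorial : ℝ) = ((n:ℝ)+1) * (n.factorial : ℝ) := by
        rw [Nat.factorial_succ]; push_cast; ring
      simp only [pow_zero, Nat.factorial_zero, Nat.add_zero, Nat.cast_one, one_mul, mul_one]
      rw [this]
      have hn : (0:ℝ) < (n.factorial : ℝ) := by exact_mod_cast Nat.factorial_pos n
      field_simp
      ring
    rw [h0, zero_add]
    have key : ∀ j : ℕ,
        ((n:ℝ)+1) * (((-1 : ℝ) ^ (j+1) / (((j+1).factorial : ℝ) * (((n+1) + (j+1)).factorial : ℝ))) * u ^ (j+1))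
          - ((-1 : ℝ) ^ (j+1) / (((j+1).factorial : ℝ) * ((n + (j+1)).factorial : ℝ))) * u ^ (j+1)
        = u * (((-1 : ℝ) ^ j / ((j.factorial : ℝ) * (((n+2) + j).factorial : ℝ))) * u ^ j) := by
      intro j
      have e2 : (n+1) + (j+1) = (n+2) + j := by omega
      have e3 : n + (j+1) = (n + j) + 1 := by omega
      have e4 : (n+2) + j = ((n+j)+1) + 1 := by omega
      rw [e2, e3, e4]
      have hj : (0:ℝ) < (j.factorial : ℝ) := by exact_mod_cast Nat.factorial_pos j
      have hnj : (0:ℝ) < (((n+j)).factorial : ℝ) := by exact_mod_cast Nat.factorial_pos _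
      rw [Nat.factorial_succ ((n+j)+1), Nat.factorial_succ (n+j), Nat.factorial_succ j, pow_succ, pow_succ]
      push_cast
      field_simp
      ring
    simp_rw [key]
    rw [tsum_mul_left]
    rfl
  linarith [h1]

lemma phi_hasDerivAt (n : ℕ) (v : ℝ) :
    HasDerivAt (fun w => (n:ℝ) * gb n w - 2*w*gb (n+1) w)
      (-((n:ℝ)+2) * gb (n+1) v + 2*v*gb (n+2) v) v := by
  have h1 := (gb_hasDerivAt n v).const_mul (n:ℝ)
  have h2 := ((hasDerivAt_id v).mul (gb_hasDerivAt (n+1) v)).const_mul (2:ℝ)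
  have := h1.sub h2
  simp only [show n+1+1 = n+2 from rfl, id_eq] at this
  have e : (fun w => (n:ℝ) * gb n w - 2*w*gb (n+1) w)
      = ((fun y => (n:ℝ) * gb n y) - fun y => 2 * ((id * gb (n + 1) : ℝ → ℝ)) y) := by
    funext w; simp only [Pi.sub_apply, Pi.mul_apply, id_eq]; ring
  rw [e]
  refine this.congr_deriv ?_
  ring

lemma phi_continuous (n : ℕ) : Continuous (fun w => (n:ℝ) * gb n w - 2*w*gb (n+1) w) :=
  (continuous_const.mul (gb_continuous n)).sub
    ((continuous_const.mul continuous_id).mul (gb_continuous (n+1)))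

lemma phi_pos (n : ℕ) (hn : 1 ≤ n) {b : ℝ} (hb : b ≤ (n:ℝ)^2/4)
    (hg : ∀ v, 0 < v → v < b → 0 < gb n v) :
    ∀ u, 0 < u → u ≤ b → 0 < (n:ℝ) * gb n u - 2*u*gb (n+1) u := by
  intro u hu hub
  have hn0 : (0:ℝ) < (n:ℝ) := by exact_mod_cast hn
  have hp : (0:ℝ) < (n:ℝ)/2 := by positivity
  set φ : ℝ → ℝ := fun w => (n:ℝ) * gb n w - 2*w*gb (n+1) w with hφdef
  set h : ℝ → ℝ := fun w => w ^ ((n:ℝ)/2) * φ w with hhdef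
  have hb0 : (0:ℝ) ≤ b := le_trans hu.le hub
  have hcont : ContinuousOn h (Icc 0 b) := by
    apply ContinuousOn.mul ?_ (phi_continuous n).continuousOn
    intro v _
    exact (Real.continuousAt_rpow_const v ((n:ℝ)/2) (Or.inr hp.le)).continuousWithinAt
  have hderiv : ∀ v ∈ Ioo (0:ℝ) b,
      HasDerivAt h (v ^ ((n:ℝ)/2 - 1) * (((n:ℝ)^2 - 4*v)/2 * gb n v)) v := by
    intro v hv
    have hv0 : (0:ℝ) < v := hv.1
    have hd := (Real.hasDerivAt_rpow_const (x := v) (p := (n:ℝ)/2)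
      (Or.inl hv0.ne')).mul (phi_hasDerivAt n v)
    have hvp : v ^ ((n:ℝ)/2) = v ^ ((n:ℝ)/2 - 1) * v := by
      rw [← Real.rpow_add_one hv0.ne']; ring_nf
    have heq : (n:ℝ)/2 * v ^ ((n:ℝ)/2 - 1) * φ v
        + v ^ ((n:ℝ)/2) * (-((n:ℝ)+2) * gb (n+1) v + 2*v*gb (n+2) v)
        = v ^ ((n:ℝ)/2 - 1) * (((n:ℝ)^2 - 4*v)/2 * gb n v) := by
      rw [hvp]
      simp only [hφdef]
      linear_combination (2*v*(v ^ ((n:ℝ)/2 - 1))) * gb_rec n v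
    exact heq ▸ hd
  have hmono : StrictMonoOn h (Icc 0 b) := by
    apply strictMonoOn_of_deriv_pos (convex_Icc 0 b) hcont
    rw [interior_Icc]
    intro v hv
    rw [(hderiv v hv).deriv]
    have h1 : (0:ℝ) < v ^ ((n:ℝ)/2 - 1) := Real.rpow_pos_of_pos hv.1 _
    have h2 : (0:ℝ) < ((n:ℝ)^2 - 4*v)/2 := by
      have : v < (n:ℝ)^2/4 := lt_of_lt_of_le hv.2 hb
      linarith
    exact mul_pos h1 (mul_pos h2 (hg v hv.1 hv.2))
  have h0 : h 0 = 0 := by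
    simp only [hhdef, Real.zero_rpow (ne_of_gt hp), zero_mul]
  have hlt : h 0 < h u := hmono ⟨le_rfl, hb0⟩ ⟨hu.le, hub⟩ hu
  rw [h0] at hlt
  have hup : (0:ℝ) < u ^ ((n:ℝ)/2) := Real.rpow_pos_of_pos hu _
  by_contra hcon
  push_neg at hcon
  have : h u ≤ 0 := mul_nonpos_of_nonneg_of_nonpos hup.le hcon
  linarith

lemma gb_pos (n : ℕ) (hn : 1 ≤ n) :
    ∀ u : ℝ, 0 < u → u ≤ (n:ℝ)^2/4 → 0 < gb n u := by
  by_contra hcon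
  push_neg at hcon
  obtain ⟨u₁, hu₁, hu₁le, hle⟩ := hcon
  have hn0 : (0:ℝ) < (n:ℝ) := by exact_mod_cast hn
  have hp : (0:ℝ) < (n:ℝ)/2 := by positivity
  set S : Set ℝ := {v | v ∈ Icc 0 u₁ ∧ gb n v ≤ 0} with hSdef
  have hSne : S.Nonempty := ⟨u₁, ⟨hu₁.le, le_rfl⟩, hle⟩
  have hSclosed : IsClosed S := by
    have : S = Icc 0 u₁ ∩ (gb n) ⁻¹' (Iic 0) := by
      ext v; simp [hSdef, and_comm]
    rw [this]
    exact isClosed_Icc.inter (isClosed_Iic.preimage (gb_continuous n))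
  have hSbdd : BddBelow S := ⟨0, fun v hv => hv.1.1⟩
  set c : ℝ := sInf S with hcdef
  have hcS : c ∈ S := hSclosed.csInf_mem hSne hSbdd
  have hc0 : 0 ≤ c := hcS.1.1
  have hcne : c ≠ 0 := by
    intro h
    have h2 := hcS.2
    rw [h, gb_zero n] at h2
    have h3 : (0:ℝ) < 1 / (n.factorial : ℝ) := by positivity
    linarith
  have hcpos : 0 < c := lt_of_le_of_ne hc0 (Ne.symm hcne)
  have hcle : c ≤ (n:ℝ)^2/4 := le_trans hcS.1.2 hu₁le
  have hgpos : ∀ v, 0 < v → v < c → 0 < gb n v := by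
    intro v hv hvc
    by_contra hgc
    push_neg at hgc
    have : v ∈ S := ⟨⟨hv.le, le_trans hvc.le hcS.1.2⟩, hgc⟩
    have := csInf_le hSbdd this
    linarith
  have hφ := phi_pos n hn hcle hgpos
  -- Y = v^(n/2) * gb n v is strictly increasing on [0, c]
  set Y : ℝ → ℝ := fun w => w ^ ((n:ℝ)/2) * gb n w with hYdef
  have hYcont : ContinuousOn Y (Icc 0 c) := by
    apply ContinuousOn.mul ?_ (gb_continuous n).continuousOn
    intro v _
    exact (Real.continuousAt_rpow_const v ((n:ℝ)/2) (Or.inr hp.le)).continuousWithinAt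
  have hYderiv : ∀ v ∈ Ioo (0:ℝ) c,
      HasDerivAt Y (v ^ ((n:ℝ)/2 - 1)
        * (((n:ℝ) * gb n v - 2*v*gb (n+1) v)/2)) v := by
    intro v hv
    have hv0 : (0:ℝ) < v := hv.1
    have hd := (Real.hasDerivAt_rpow_const (x := v) (p := (n:ℝ)/2)
      (Or.inl hv0.ne')).mul (gb_hasDerivAt n v)
    have hvp : v ^ ((n:ℝ)/2) = v ^ ((n:ℝ)/2 - 1) * v := by
      rw [← Real.rpow_add_one hv0.ne']; ring_nf
    have heq : (n:ℝ)/2 * v ^ ((n:ℝ)/2 - 1) * gb n v + v ^ ((n:ℝ)/2) * (-(gb (n+1) v))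
        = v ^ ((n:ℝ)/2 - 1) * (((n:ℝ) * gb n v - 2*v*gb (n+1) v)/2) := by
      rw [hvp]; ring
    exact heq ▸ hd
  have hYmono : StrictMonoOn Y (Icc 0 c) := by
    apply strictMonoOn_of_deriv_pos (convex_Icc 0 c) hYcont
    rw [interior_Icc]
    intro v hv
    rw [(hYderiv v hv).deriv]
    have h1 : (0:ℝ) < v ^ ((n:ℝ)/2 - 1) := Real.rpow_pos_of_pos hv.1 _
    have h2 := hφ v hv.1 hv.2.le
    have : (0:ℝ) < ((n:ℝ) * gb n v - 2*v*gb (n+1) v)/2 := by linarith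
    exact mul_pos h1 this
  have hY0 : Y 0 = 0 := by
    simp only [hYdef, Real.zero_rpow (ne_of_gt hp), zero_mul]
  have hlt : Y 0 < Y c := hYmono ⟨le_rfl, hc0⟩ ⟨hc0, le_rfl⟩ hcpos
  rw [hY0] at hlt
  have hcp : (0:ℝ) < c ^ ((n:ℝ)/2) := Real.rpow_pos_of_pos hcpos _
  have : Y c ≤ 0 := mul_nonpos_of_nonneg_of_nonpos hcp.le hcS.2
  linarith

lemma besselJ_eq_gb (n : ℕ) (t : ℝ) (ht : 0 < t) :
    besselJ (n:ℝ) t = (t/2)^n * gb n (t^2/4) := by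
  have ht2 : (0:ℝ) < t/2 := by linarith
  have key : ∀ k : ℕ, ((-1 : ℝ) ^ k / ((k.factorial : ℝ) * Real.Gamma ((n:ℝ) + (k : ℝ) + 1)))
        * (t / 2) ^ (2 * (k : ℝ) + (n:ℝ))
      = (((-1 : ℝ) ^ k / ((k.factorial : ℝ) * ((n + k).factorial : ℝ))) * (t^2/4) ^ k)
        * (t/2)^n := by
    intro k
    have hg : Real.Gamma ((n:ℝ) + (k:ℝ) + 1) = ((n+k).factorial : ℝ) := by
      rw [show (n:ℝ) + (k:ℝ) + 1 = ((n+k : ℕ) : ℝ) + 1 by push_cast; ring,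
        Real.Gamma_nat_eq_factorial]
    have hr : (t/2 : ℝ) ^ (2 * (k : ℝ) + (n:ℝ)) = (t/2) ^ (2*k + n : ℕ) := by
      rw [← Real.rpow_natCast (t/2) (2*k+n)]
      congr 1
      push_cast
      ring
    rw [hg, hr, pow_add, pow_mul]
    have h4 : ((t/2)^2 : ℝ) = t^2/4 := by ring
    rw [h4]
    ring
  unfold besselJ gb
  simp_rw [key]
  rw [tsum_mul_right, mul_comm]

set_option maxHeartbeats 1000000 in
/-- For every integer `m ≥ 1` and `0 < x ≤ 1`:
`0 < xm/(2m+2) < J_{m+1}(mx)/J_m(mx) < xm/(m+2) < 1`. -/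
theorem stmt6 (m : ℕ) (hm : 1 ≤ m) (x : ℝ) (hx0 : 0 < x) (hx1 : x ≤ 1) :
    0 < x * (m:ℝ) / (2*(m:ℝ) + 2) ∧
    x * (m:ℝ) / (2*(m:ℝ) + 2) < besselJ ((m:ℝ)+1) ((m:ℝ)*x) / besselJ m ((m:ℝ)*x) ∧
    besselJ ((m:ℝ)+1) ((m:ℝ)*x) / besselJ m ((m:ℝ)*x) < x * (m:ℝ) / ((m:ℝ) + 2) ∧
    x * (m:ℝ) / ((m:ℝ) + 2) < 1 := by
  have hm0 : (0:ℝ) < (m:ℝ) := by exact_mod_cast hm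
  set t : ℝ := (m:ℝ)*x with htdef
  have ht : 0 < t := mul_pos hm0 hx0
  set u : ℝ := t^2/4 with hudef
  have hu : 0 < u := by positivity
  have htm : t ≤ (m:ℝ) := by nlinarith
  have hum : u ≤ (m:ℝ)^2/4 := by rw [hudef]; nlinarith
  have hA : 0 < gb m u := gb_pos m hm u hu hum
  have hB : 0 < gb (m+1) u := gb_pos (m+1) (by omega) u hu (by push_cast; nlinarith)
  have hC : 0 < gb (m+2) u := gb_pos (m+2) (by omega) u hu (by push_cast; nlinarith)
  have hrec1 : gb m u = ((m:ℝ)+1) * gb (m+1) u - u * gb (m+2) u := gb_rec m u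
  have hrec2 : gb (m+1) u = ((m:ℝ)+2) * gb (m+2) u - u * gb (m+3) u := by
    have h := gb_rec (m+1) u
    simp only [show m+1+1 = m+2 by omega, show m+1+2 = m+3 by omega] at h
    push_cast at h
    linarith [h]
  have hphi : 0 < ((m:ℝ)+2) * gb (m+2) u - 2*u*gb (m+3) u := by
    have h := phi_pos (m+2) (by omega) (b := ((m+2:ℕ):ℝ)^2/4) le_rfl
      (fun v hv hvb => gb_pos (m+2) (by omega) v hv hvb.le) u hu (by push_cast; nlinarith)
    simp only [show m+2+1 = m+3 by omega] at h
    push_cast at h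
    linarith [h]
  have claim1 : gb m u < ((m:ℝ)+1) * gb (m+1) u := by nlinarith [mul_pos hu hC]
  have claim2 : ((m:ℝ)+2) * gb (m+1) u < 2 * gb m u := by
    have e : 2 * gb m u - ((m:ℝ)+2) * gb (m+1) u
        = ((m:ℝ)*((m:ℝ)+2) - 2*u) * gb (m+2) u - (m:ℝ)*u*gb (m+3) u := by
      linear_combination 2*hrec1 + (m:ℝ)*hrec2
    have h6 : (m:ℝ)*u*gb (m+3) u < (m:ℝ)/2 * (((m:ℝ)+2) * gb (m+2) u) := by
      have h7 := mul_lt_mul_of_pos_left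
        (show 2*u*gb (m+3) u < ((m:ℝ)+2)*gb (m+2) u from by linarith)
        (show (0:ℝ) < (m:ℝ)/2 from by positivity)
      nlinarith [h7]
    nlinarith [e, h6, mul_pos hm0 hC, mul_le_mul_of_nonneg_right hum hC.le]
  have hbm : besselJ (m:ℝ) t = (t/2)^m * gb m u := besselJ_eq_gb m t ht
  have hbm1 : besselJ ((m:ℝ)+1) t = (t/2)^(m+1) * gb (m+1) u := by
    rw [show ((m:ℝ)+1) = ((m+1:ℕ):ℝ) by push_cast; ring]
    exact besselJ_eq_gb (m+1) t ht
  have hP : (0:ℝ) < (t/2)^m := by positivity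
  have hratio : besselJ ((m:ℝ)+1) t / besselJ (m:ℝ) t = (t/2) * gb (m+1) u / gb m u := by
    rw [hbm, hbm1, pow_succ]
    rw [show (t/2)^m * (t/2) * gb (m+1) u = (t/2)^m * ((t/2) * gb (m+1) u) from by ring]
    rw [mul_div_mul_left _ _ hP.ne']
  refine ⟨by positivity, ?_, ?_, ?_⟩
  · rw [hratio, div_lt_div_iff₀ (by positivity) hA, htdef]
    have hh := mul_lt_mul_of_pos_left claim1 (mul_pos hx0 hm0)
    have he : (x*(m:ℝ))*(((m:ℝ)+1)*gb (m+1) u) = (m:ℝ)*x/2*gb (m+1) u*(2*(m:ℝ)+2) := by ring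
    linarith [hh, he]
  · rw [hratio, div_lt_div_iff₀ hA (by positivity), htdef]
    have hh := mul_lt_mul_of_pos_left claim2 (mul_pos hx0 hm0)
    have he1 : (m:ℝ)*x/2*gb (m+1) u*((m:ℝ)+2) = (x*(m:ℝ))*(((m:ℝ)+2)*gb (m+1) u)/2 := by ring
    have he2 : x*(m:ℝ)*gb m u = (x*(m:ℝ))*(2*gb m u)/2 := by ring
    linarith [hh, he1, he2]
  · rw [div_lt_one (by positivity : (0:ℝ) < (m:ℝ)+2)]
    nlinarith [mul_le_mul_of_nonneg_left hx1 hm0.le]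
end

section
/- For every integer m ≥ 0 and every real x with 0 < x ≤ m + 1/2, one has ( √((2m+1)² − 4x²) − 1 )/(2x) ≤ J_m'(x)/J_m(x) < m/x. -/
open MeasureTheory Filter Set

namespace Stmt7

open Topology

noncomputable def c (m k : ℕ) : ℝ :=
  (-1)^k / (k.factorial * (m+k).factorial * 2^(2*k+m))

noncomputable def J (m : ℕ) (x : ℝ) : ℝ := ∑' k, c m k * x^(2*k+m)

noncomputable def J' (m : ℕ) (x : ℝ) : ℝ :=
  ∑' k, c m k * (((2*k+m : ℕ) : ℝ) * x^(2*k+m-1))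

lemma abs_c (m k : ℕ) : |c m k| = 1 / (k.factorial * (m+k).factorial * 2^(2*k+m)) := by
  rw [c, abs_div, abs_pow, abs_neg, abs_one, one_pow]
  congr 1
  rw [abs_of_pos]
  positivity

lemma fact_ne (n : ℕ) : ((n.factorial : ℝ)) ≠ 0 := Nat.cast_ne_zero.2 n.factorial_ne_zero

lemma sum_aux (q : ℝ) : Summable (fun k : ℕ => (k : ℝ) * q^k / k.factorial) := by
  rw [← summable_nat_add_iff 1]
  have h : ∀ k : ℕ, ((k+1 : ℕ) : ℝ) * q^(k+1) / ((k+1 : ℕ).factorial : ℝ)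
      = q * (q^k / k.factorial) := by
    intro k
    rw [Nat.factorial_succ]
    have h1 : (k.factorial : ℝ) ≠ 0 := Nat.cast_ne_zero.2 k.factorial_ne_zero
    push_cast
    field_simp
    ring
  simpa only [h] using (Real.summable_pow_div_factorial q).mul_left q

lemma sum_main (m : ℕ) (q : ℝ) :
    Summable (fun k : ℕ => (2*(k:ℝ)+m+1) * q^k / k.factorial) := by
  have h1 := (sum_aux q).mul_left 2
  have h2 := (Real.summable_pow_div_factorial q).mul_left ((m : ℝ) + 1)
  have := h1.add h2
  refine this.congr fun k => ?_
  field_simp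
  ring

lemma bound_gen (m : ℕ) (S : ℝ) (hS : 1 ≤ S) (k : ℕ) (y : ℝ) (hy : |y| ≤ S) (e : ℕ)
    (he : e ≤ 2*k+m) (a : ℝ) (ha : 0 ≤ a) (ha' : a ≤ 2*(k:ℝ)+m+1) :
    |c m k * (a * y^e)| ≤ (2*(k:ℝ)+m+1) * ((S^2/4)^k / k.factorial) * S^m := by
  have hS0 : 0 ≤ S := le_trans zero_le_one hS
  have h1 : |y^e| ≤ S^(2*k+m) := by
    rw [abs_pow]
    calc |y|^e ≤ S^e := pow_le_pow_left₀ (abs_nonneg y) hy e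
    _ ≤ S^(2*k+m) := pow_le_pow_right₀ hS he
  have h2 : |c m k| ≤ 1 / (k.factorial * 4^k * 2^m) := by
    rw [abs_c]
    apply div_le_div_of_nonneg_left _ (by positivity) _
    · norm_num
    · have h3 : (1:ℝ) ≤ ((m+k).factorial : ℝ) := by
        exact_mod_cast Nat.one_le_iff_ne_zero.2 (m+k).factorial_ne_zero
      have h4 : (2:ℝ)^(2*k+m) = 4^k * 2^m := by
        rw [pow_add, pow_mul]; norm_num
      calc (k.factorial : ℝ) * 4^k * 2^m = k.factorial * 1 * (4^k * 2^m) := by ring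
      _ ≤ (k.factorial : ℝ) * (m+k).factorial * (4^k * 2^m) := by
          apply mul_le_mul_of_nonneg_right _ (by positivity)
          exact mul_le_mul_of_nonneg_left h3 (by positivity)
      _ = (k.factorial : ℝ) * (m+k).factorial * 2^(2*k+m) := by rw [h4]
  calc |c m k * (a * y^e)| = |c m k| * (a * |y^e|) := by
        rw [abs_mul, abs_mul, abs_of_nonneg ha]
  _ ≤ (1 / (k.factorial * 4^k * 2^m)) * ((2*(k:ℝ)+m+1) * S^(2*k+m)) := by
      apply mul_le_mul h2 _ (by positivity) (by positivity)
      exact mul_le_mul ha' h1 (abs_nonneg _) (by positivity)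
  _ = (2*(k:ℝ)+m+1) * ((S^2/4)^k / k.factorial) * S^m / 2^m := by
      rw [pow_add, pow_mul, div_pow]
      field_simp
  _ ≤ (2*(k:ℝ)+m+1) * ((S^2/4)^k / k.factorial) * S^m := by
      apply div_le_self (by positivity)
      exact one_le_pow₀ (by norm_num)

lemma summable_B (m : ℕ) (S : ℝ) :
    Summable (fun k : ℕ => (2*(k:ℝ)+m+1) * ((S^2/4)^k / k.factorial) * S^m) := by
  refine ((sum_main m (S^2/4)).mul_right (S^m)).congr fun k => ?_
  rw [mul_div_assoc]

lemma summable_gen (m : ℕ) (x : ℝ) (a : ℕ → ℝ) (e : ℕ → ℕ)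
    (ha : ∀ k, 0 ≤ a k) (ha' : ∀ k, a k ≤ 2*(k:ℝ)+m+1) (he : ∀ k, e k ≤ 2*k+m) :
    Summable (fun k => c m k * (a k * x^(e k))) := by
  set S := max 1 |x| with hSdef
  have hS : 1 ≤ S := le_max_left _ _
  have hx : |x| ≤ S := le_max_right _ _
  refine Summable.of_norm_bounded (summable_B m S) fun k => ?_
  exact bound_gen m S hS k x hx (e k) (he k) (a k) (ha k) (ha' k)

lemma summable_J (m : ℕ) (x : ℝ) : Summable (fun k => c m k * x^(2*k+m)) := by
  have := summable_gen m x (fun _ => 1) (fun k => 2*k+m) (fun k => zero_le_one)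
    (fun k => by show (1:ℝ) ≤ 2*(k:ℝ)+m+1
                 have h1 : (0:ℝ) ≤ k := Nat.cast_nonneg k
                 have h2 : (0:ℝ) ≤ m := Nat.cast_nonneg m; linarith)
    (fun k => le_refl _)
  simpa using this

lemma summable_J' (m : ℕ) (x : ℝ) :
    Summable (fun k => c m k * (((2*k+m:ℕ):ℝ) * x^(2*k+m-1))) := by
  have := summable_gen m x (fun k => ((2*k+m : ℕ):ℝ)) (fun k => 2*k+m-1)
    (fun k => by positivity)
    (fun k => by show ((2*k+m:ℕ):ℝ) ≤ 2*(k:ℝ)+m+1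
                 push_cast
                 linarith)
    (fun k => by show 2*k+m-1 ≤ 2*k+m; omega)
  exact this

lemma hasDerivAt_J (m : ℕ) (x : ℝ) : HasDerivAt (J m) (J' m x) x := by
  have hJ : J m = fun z => ∑' n, c m n * z^(2*n+m) := rfl
  rw [hJ, J']
  have hball : x ∈ Metric.ball (0:ℝ) (|x|+1) := by
    rw [Metric.mem_ball, Real.dist_eq, sub_zero]
    linarith [abs_nonneg x]
  set S := max 1 (|x|+1) with hSdef
  have hS : 1 ≤ S := le_max_left _ _
  refine hasDerivAt_tsum_of_isPreconnected (summable_B m S) Metric.isOpen_ball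
    ((convex_ball (0:ℝ) _).isPreconnected)
    (fun n y _ => ((hasDerivAt_pow (2*n+m) y).const_mul (c m n))) ?_ hball
    (summable_J m x) hball
  intro n y hy
  have hyS : |y| ≤ S := by
    have : |y| < |x|+1 := by simpa [Real.dist_eq] using hy
    exact le_trans this.le (le_max_right _ _)
  exact bound_gen m S hS n y hyS _ (by omega) _ (by positivity) (by push_cast; linarith)

lemma c_succ (m k : ℕ) : c m k = (2*(k:ℝ)+2*m+2) * c (m+1) k := by
  rw [c, c]
  have h1 : m+1+k = (m+k)+1 := by omega
  have h2 : 2*k+(m+1) = (2*k+m)+1 := by omega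
  rw [h1, h2, Nat.factorial_succ, pow_succ]
  have e1 := fact_ne k
  have e2 := fact_ne (m+k)
  have e3 : (2:ℝ)^(2*k+m) ≠ 0 := by positivity
  push_cast
  field_simp
  ring

lemma c_succ' (m k : ℕ) : (2*(k:ℝ)+2) * c m (k+1) = - c (m+1) k := by
  rw [c, c]
  have h1 : m+(k+1) = (m+1+k) := by omega
  have h2 : 2*(k+1)+m = (2*k+(m+1))+1 := by omega
  rw [h1, h2, Nat.factorial_succ, pow_succ]
  have e1 := fact_ne k
  have e2 := fact_ne (m+1+k)
  have e3 : (2:ℝ)^(2*k+(m+1)) ≠ 0 := by positivity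
  push_cast
  field_simp
  ring

lemma summable_shift (m : ℕ) (x : ℝ) :
    Summable (fun k => c m k * (2*(k:ℝ) * x^(2*k+m-1))) := by
  refine summable_gen m x (fun k => 2*(k:ℝ)) (fun k => 2*k+m-1) (fun k => by positivity)
    (fun k => by show (2*(k:ℝ)) ≤ 2*(k:ℝ)+m+1
                 have h2 : (0:ℝ) ≤ m := Nat.cast_nonneg m; linarith)
    (fun k => by show 2*k+m-1 ≤ 2*k+m; omega)

lemma J'_eq (m : ℕ) (x : ℝ) (hx : x ≠ 0) : J' m x = ((m:ℝ)/x) * J m x - J (m+1) x := by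
  rw [J']
  have hterm : ∀ k, c m k * (((2*k+m:ℕ):ℝ) * x^(2*k+m-1))
      = ((m:ℝ)/x) * (c m k * x^(2*k+m)) + c m k * (2*(k:ℝ) * x^(2*k+m-1)) := by
    intro k
    by_cases h0 : 2*k+m = 0
    · have hk : k = 0 := by omega
      have hm : m = 0 := by omega
      subst hk; subst hm; norm_num
    · have key : ((2*k+m:ℕ):ℝ) = 2*(k:ℝ)+m := by push_cast; ring
      obtain ⟨e, he⟩ : ∃ e, 2*k+m = e+1 := ⟨2*k+m-1, by omega⟩
      rw [key, show 2*k+m-1 = e from by omega, he, pow_succ]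
      field_simp
      ring
  rw [tsum_congr hterm, Summable.tsum_add ((summable_J m x).mul_left _) (summable_shift m x),
    tsum_mul_left]
  have hshift : ∑' k, c m k * (2*(k:ℝ) * x^(2*k+m-1)) = - J (m+1) x := by
    rw [Summable.tsum_eq_zero_add (summable_shift m x)]
    have h0 : c m 0 * (2*((0:ℕ):ℝ) * x^(2*0+m-1)) = 0 := by norm_num
    have hterm2 : ∀ k : ℕ, c m (k+1) * (2*((k+1:ℕ):ℝ) * x^(2*(k+1)+m-1))
        = - (c (m+1) k * x^(2*k+(m+1))) := by
      intro k
      have e1 : 2*(k+1)+m-1 = 2*k+(m+1) := by omega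
      rw [e1]
      have h := c_succ' m k
      push_cast
      linear_combination x^(2*k+(m+1)) * h
    rw [h0, tsum_congr hterm2, tsum_neg, zero_add]
    rw [J]
  rw [hshift]
  rfl

lemma J'_eq₂ (m : ℕ) (x : ℝ) (hx : x ≠ 0) :
    J' (m+1) x = J m x - (((m:ℝ)+1)/x) * J (m+1) x := by
  rw [J']
  have hterm : ∀ k, c (m+1) k * (((2*k+(m+1):ℕ):ℝ) * x^(2*k+(m+1)-1))
      = c m k * x^(2*k+m) - (((m:ℝ)+1)/x) * (c (m+1) k * x^(2*k+(m+1))) := by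
    intro k
    have e1 : 2*k+(m+1)-1 = 2*k+m := by omega
    have e2 : x^(2*k+(m+1)) = x^(2*k+m) * x := by rw [← pow_succ]; congr 1
    rw [e1, c_succ m k, e2]
    push_cast
    field_simp
    ring
  rw [tsum_congr hterm, Summable.tsum_sub (summable_J m x) ((summable_J (m+1) x).mul_left _),
    tsum_mul_left]
  rfl

noncomputable def g (m : ℕ) (x : ℝ) (k : ℕ) : ℝ :=
  x^(2*k+m) / (k.factorial * (m+k).factorial * 2^(2*k+m))

lemma f_eq (m k : ℕ) (x : ℝ) : c m k * x^(2*k+m) = (-1)^k * g m x k := by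
  rw [c, g]; ring

lemma g_pos (m k : ℕ) {x : ℝ} (hx : 0 < x) : 0 < g m x k := by
  rw [g]; positivity

lemma g_succ_le (m k : ℕ) {x : ℝ} (hx : 0 < x) :
    g m x (k+1) ≤ x^2/(4*((m:ℝ)+1)) * g m x k := by
  have key : g m x (k+1) = x^2 * g m x k / (4*((k:ℝ)+1)*((m:ℝ)+(k:ℝ)+1)) := by
    rw [g, g]
    have h1 : 2*(k+1)+m = (2*k+m)+2 := by omega
    have h2 : m+(k+1) = (m+k)+1 := by omega
    rw [h1, h2, Nat.factorial_succ, Nat.factorial_succ]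
    have e1 := fact_ne k
    have e2 := fact_ne (m+k)
    have e3 : (2:ℝ)^(2*k+m) ≠ 0 := by positivity
    have e4 : x ≠ 0 := ne_of_gt hx
    push_cast
    field_simp
    ring
  rw [key]
  have hk : (0:ℝ) ≤ (k:ℝ) := Nat.cast_nonneg k
  have hm : (0:ℝ) ≤ (m:ℝ) := Nat.cast_nonneg m
  calc x^2 * g m x k / (4*((k:ℝ)+1)*((m:ℝ)+(k:ℝ)+1)) ≤ x^2 * g m x k / (4*((m:ℝ)+1)) := by
        apply div_le_div_of_nonneg_left (mul_nonneg (by positivity) (g_pos m k hx).le)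
          (by positivity) (by nlinarith)
  _ = x^2/(4*((m:ℝ)+1)) * g m x k := by ring

lemma g_one (m : ℕ) (x : ℝ) :
    g m x 1 = x^2/(4*((m:ℝ)+1)) * g m x 0 := by
  rw [g, g]
  have h1 : 2*1+m = m+2 := by omega
  have h2 : m+1 = m+1 := rfl
  rw [h1]
  simp only [Nat.factorial_one, Nat.factorial_zero, Nat.add_zero, mul_zero, zero_add,
    Nat.factorial_succ]
  have e2 := fact_ne m
  push_cast
  have e4 : (2:ℝ)^m ≠ 0 := by positivity
  field_simp
  ring

lemma f_even (m k : ℕ) (x : ℝ) : c m (2*k) * x^(2*(2*k)+m) = g m x (2*k) := by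
  rw [f_eq, Even.neg_one_pow (even_two_mul k), one_mul]

lemma f_odd (m k : ℕ) (x : ℝ) : c m (2*k+1) * x^(2*(2*k+1)+m) = - g m x (2*k+1) := by
  rw [f_eq, Odd.neg_one_pow ⟨k, by ring⟩, neg_one_mul]

lemma J_bounds (m : ℕ) {x : ℝ} (hx : 0 < x) (hq : x^2 < 4*((m:ℝ)+1)) :
    g m x 0 * (1 - x^2/(4*((m:ℝ)+1))) ≤ J m x ∧ J m x ≤ g m x 0 := by
  set q : ℝ := x^2/(4*((m:ℝ)+1)) with hqdef
  have hq0 : 0 ≤ q := by positivity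
  have hq1 : q < 1 := by
    rw [hqdef, div_lt_one (by positivity)]; exact hq
  set f : ℕ → ℝ := fun k => c m k * x^(2*k+m) with hfdef
  have hf : Summable f := summable_J m x
  have he : Summable (fun k => f (2*k)) := hf.comp_injective (fun a b h => by omega)
  have ho : Summable (fun k => f (2*k+1)) := hf.comp_injective (fun a b h => by omega)
  have he' : Summable (fun k => f (2*k+2)) := hf.comp_injective (fun a b h => by omega)
  have hgle : ∀ k, g m x (k+1) ≤ g m x k := fun k =>
    le_trans (g_succ_le m k hx) (by
      calc q * g m x k ≤ 1 * g m x k := by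
            apply mul_le_mul_of_nonneg_right hq1.le (g_pos m k hx).le
      _ = g m x k := one_mul _)
  constructor
  · have key : J m x = ∑' j, (f (2*j) + f (2*j+1)) := by
      rw [Summable.tsum_add he ho, tsum_even_add_odd he ho]; rfl
    rw [key]
    have hpair : Summable (fun j => f (2*j) + f (2*j+1)) := he.add ho
    have hlb : f 0 + f 1 ≤ ∑' j, (f (2*j) + f (2*j+1)) := by
      have h0 : f 0 + f 1 = (fun j => f (2*j) + f (2*j+1)) 0 := by norm_num
      rw [h0]
      apply Summable.le_tsum hpair 0
      intro j hj
      have h1 := f_even m j x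
      have h2 := f_odd m j x
      show 0 ≤ f (2*j) + f (2*j+1)
      have : f (2*j) + f (2*j+1) = g m x (2*j) - g m x (2*j+1) := by
        rw [hfdef]; simp only []; rw [h1, h2]; ring
      rw [this]
      linarith [hgle (2*j)]
    refine le_trans (le_of_eq ?_) hlb
    have h1 : f 0 = g m x 0 := by
      rw [hfdef]; simpa using f_even m 0 x
    have h2 : f 1 = - g m x 1 := by
      rw [hfdef]; simpa using f_odd m 0 x
    rw [h1, h2, g_one]
    ring
  · have key : J m x = f 0 + ∑' k, f (k+1) := Summable.tsum_eq_zero_add hf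
    have h1 : f 0 = g m x 0 := by rw [hfdef]; simpa using f_even m 0 x
    have key2 : ∑' k, f (k+1) = ∑' j, (f (2*j+1) + f (2*j+2)) := by
      rw [Summable.tsum_add ho he', tsum_even_add_odd (f := fun k => f (k+1)) ho he']
    have hnp : ∑' j, (f (2*j+1) + f (2*j+2)) ≤ 0 := by
      apply tsum_nonpos
      intro j
      have h2 := f_odd m j x
      have h3 := f_even m (j+1) x
      have e1 : 2*(j+1) = 2*j+2 := by omega
      rw [e1] at h3
      have : f (2*j+1) + f (2*j+2) = - g m x (2*j+1) + g m x (2*j+2) := by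
        rw [hfdef]; simp only []; rw [h2, h3]
      rw [this]
      linarith [hgle (2*j+1)]
    rw [key, key2, h1]
    linarith

lemma cont_J (m : ℕ) : Continuous (J m) :=
  continuous_iff_continuousAt.2 fun x => (hasDerivAt_J m x).continuousAt

lemma g_zero (m : ℕ) (x : ℝ) : g m x 0 = x^m / (m.factorial * 2^m) := by
  simp [g]

lemma pos_small (m : ℕ) {x : ℝ} (hx : 0 < x) (hq : x^2 < 4*((m:ℝ)+1)) : 0 < J m x := by
  have h := (J_bounds m hx hq).1
  have h2 : 0 < g m x 0 * (1 - x^2/(4*((m:ℝ)+1))) := by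
    apply mul_pos (g_pos m 0 hx)
    have : x^2/(4*((m:ℝ)+1)) < 1 := by
      rw [div_lt_one (by positivity)]; exact hq
    linarith
  linarith

lemma deriv_nonpos_of_lt {f : ℝ → ℝ} {d a x1 : ℝ} (hax : a < x1) (hf : HasDerivAt f d x1)
    (hlt : ∀ y, a ≤ y → y < x1 → f x1 < f y) : d ≤ 0 := by
  have h1 : Tendsto (slope f x1) (𝓝[<] x1) (𝓝 d) :=
    (hasDerivAt_iff_tendsto_slope.1 hf).mono_left
      (nhdsWithin_mono _ (fun y hy => ne_of_lt hy))
  refine le_of_tendsto h1 ?_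
  filter_upwards [Ioo_mem_nhdsLT hax] with y hy
  rw [slope_def_field]
  apply div_nonpos_of_nonneg_of_nonpos
  · linarith [hlt y hy.1.le hy.2]
  · linarith [hy.2]

noncomputable def Z (m : ℕ) (y : ℝ) : ℝ := m * J m y - y * J (m+1) y

noncomputable def W (m : ℕ) (y : ℝ) : ℝ :=
  Z m y * Real.cos ((y-m)/2) + (y/2) * Real.sin ((y-m)/2) * J m y

lemma Z_eq (m : ℕ) {y : ℝ} (hy : y ≠ 0) : Z m y = y * J' m y := by
  rw [Z, J'_eq m y hy]
  field_simp

lemma hasDerivAt_Z (m : ℕ) {y : ℝ} (hy : y ≠ 0) :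
    HasDerivAt (Z m) ((((m:ℝ))^2/y - y) * J m y) y := by
  have h1 : HasDerivAt (Z m) ((m:ℝ) * J' m y - (1 * J (m+1) y + y * J' (m+1) y)) y := by
    exact ((hasDerivAt_J m y).const_mul (m:ℝ)).sub
      ((hasDerivAt_id y).mul (hasDerivAt_J (m+1) y))
  convert h1 using 1
  rw [J'_eq m y hy, J'_eq₂ m y hy]
  field_simp
  ring

lemma cont_Z (m : ℕ) : Continuous (Z m) := by
  apply Continuous.sub
  · exact continuous_const.mul (cont_J m)
  · exact continuous_id.mul (cont_J (m+1))

lemma hasDerivAt_W (m : ℕ) {y : ℝ} (hy : y ≠ 0) :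
    HasDerivAt (W m)
      (J m y * (((m:ℝ)^2/y - (3/4)*y) * Real.cos ((y-(m:ℝ))/2)
        + (1/2) * Real.sin ((y-(m:ℝ))/2))) y := by
  have hc : HasDerivAt (fun y : ℝ => Real.cos ((y-(m:ℝ))/2))
      (-Real.sin ((y-(m:ℝ))/2) * (1/2)) y := by
    have h := ((hasDerivAt_id y).sub_const (m:ℝ)).div_const 2
    have := h.cos
    exact this
  have hs : HasDerivAt (fun y : ℝ => Real.sin ((y-(m:ℝ))/2))
      (Real.cos ((y-(m:ℝ))/2) * (1/2)) y := by
    have h := ((hasDerivAt_id y).sub_const (m:ℝ)).div_const 2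
    have := h.sin
    exact this
  have h1 : HasDerivAt (W m)
      (((((m:ℝ))^2/y - y) * J m y) * Real.cos ((y-(m:ℝ))/2)
        + Z m y * (-Real.sin ((y-(m:ℝ))/2) * (1/2))
        + (((1/2) * Real.sin ((y-(m:ℝ))/2) + (y/2) * (Real.cos ((y-(m:ℝ))/2) * (1/2))) * J m y
          + ((y/2) * Real.sin ((y-(m:ℝ))/2)) * J' m y)) y := by
    exact ((hasDerivAt_Z m hy).mul hc).add
      ((((hasDerivAt_id y).div_const 2).mul hs).mul (hasDerivAt_J m y))
  convert h1 using 1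
  rw [J'_eq m y hy, Z]
  field_simp
  ring

lemma cont_W (m : ℕ) : Continuous (W m) := by
  have hc : Continuous (fun y : ℝ => Real.cos ((y-(m:ℝ))/2)) :=
    Real.continuous_cos.comp ((continuous_id.sub continuous_const).div_const 2)
  have hs : Continuous (fun y : ℝ => Real.sin ((y-(m:ℝ))/2)) :=
    Real.continuous_sin.comp ((continuous_id.sub continuous_const).div_const 2)
  exact ((cont_Z m).mul hc).add (((continuous_id.div_const 2).mul hs).mul (cont_J m))

lemma Z_two_pos (m : ℕ) (hm : 2 ≤ m) : 0 < Z m 2 := by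
  have hmr : (2:ℝ) ≤ (m:ℝ) := by exact_mod_cast hm
  have h2 : (0:ℝ) < 2 := two_pos
  have hq1 : (2:ℝ)^2 < 4*((m:ℝ)+1) := by nlinarith
  have hq2 : (2:ℝ)^2 < 4*(((m+1:ℕ)):ℝ)+4 := by push_cast; nlinarith
  have hb1 := (J_bounds m h2 hq1).1
  have hb2 := (J_bounds (m+1) h2 (by push_cast; push_cast at hq2; nlinarith)).2
  rw [g_zero] at hb1 hb2
  have hF : (0:ℝ) < m.factorial := by positivity
  have hfs : (((m+1).factorial:ℕ):ℝ) = ((m:ℝ)+1) * m.factorial := by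
    push_cast [Nat.factorial_succ]; ring
  have h2m : (2:ℝ)^m ≠ 0 := by positivity
  have h2m1 : (2:ℝ)^(m+1) ≠ 0 := by positivity
  have e1 : (2:ℝ)^m/((m.factorial:ℝ) * 2^m) * (1 - 2^2/(4*((m:ℝ)+1)))
      = ((m:ℝ)/((m:ℝ)+1)) * (1/(m.factorial:ℝ)) := by
    field_simp
    ring
  rw [e1] at hb1
  have e2 : (2:ℝ)^(m+1)/(((m+1).factorial:ℝ) * 2^(m+1)) = 1/(((m:ℝ)+1) * m.factorial) := by
    rw [hfs]
    field_simp
  rw [e2] at hb2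
  rw [Z]
  have t1 : (m:ℝ) * (((m:ℝ)/((m:ℝ)+1)) * (1/(m.factorial:ℝ))) ≤ (m:ℝ) * J m 2 :=
    mul_le_mul_of_nonneg_left hb1 (by positivity)
  have t2 : 2 * J (m+1) 2 ≤ 2 * (1/(((m:ℝ)+1) * m.factorial)) := by linarith
  have e3 : (m:ℝ) * (((m:ℝ)/((m:ℝ)+1)) * (1/(m.factorial:ℝ)))
      - 2 * (1/(((m:ℝ)+1) * m.factorial))
      = ((m:ℝ)^2 - 2) / (((m:ℝ)+1) * m.factorial) := by
    field_simp
  have e4 : 0 < ((m:ℝ)^2 - 2) / (((m:ℝ)+1) * m.factorial) := by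
    apply div_pos (by nlinarith) (by positivity)
  linarith

set_option maxHeartbeats 1000000 in
theorem POS (m : ℕ) (x : ℝ) (hx : 0 < x) (hxb : x ≤ (m:ℝ) + 1/2) : 0 < J m x := by
  by_cases hsmall : x^2 < 4*((m:ℝ)+1)
  · exact pos_small m hx hsmall
  push_neg at hsmall
  have hmr : (0:ℝ) ≤ m := Nat.cast_nonneg m
  have hm4 : 4 ≤ m := by
    by_contra h
    push_neg at h
    interval_cases m <;> (norm_num at hsmall hxb; nlinarith)
  have hm4r : (4:ℝ) ≤ m := by exact_mod_cast hm4
  have hx2 : 2 ≤ x := by nlinarith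
  by_contra hJx
  push_neg at hJx
  set T := Icc (2:ℝ) x ∩ (J m) ⁻¹' (Iic 0) with hT
  have hclosed : IsClosed T := isClosed_Icc.inter (isClosed_Iic.preimage (cont_J m))
  have hne : T.Nonempty := ⟨x, ⟨hx2, le_refl x⟩, hJx⟩
  have hbdd : BddBelow T := ⟨2, fun y hy => hy.1.1⟩
  set x1 := sInf T with hx1def
  have hx1T : x1 ∈ T := hclosed.csInf_mem hne hbdd
  obtain ⟨⟨hx12, hx1x⟩, hJx1⟩ := hx1T
  rw [mem_preimage, mem_Iic] at hJx1
  have hpos_lt : ∀ y, 2 ≤ y → y < x1 → 0 < J m y := by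
    intro y h2y hyx1
    by_contra hy; push_neg at hy
    have hyT : y ∈ T := ⟨⟨h2y, le_trans hyx1.le hx1x⟩, hy⟩
    exact absurd (csInf_le hbdd hyT) (not_le.2 hyx1)
  have hpos_all : ∀ y, 0 < y → y < x1 → 0 < J m y := by
    intro y hy0 hyx1
    rcases lt_or_ge y 2 with h|h
    · exact pos_small m hy0 (by nlinarith)
    · exact hpos_lt y h hyx1
  have h2x1 : 2 < x1 := by
    rcases lt_or_eq_of_le hx12 with h|h
    · exact h
    · exfalso
      have := pos_small m (x := 2) two_pos (by nlinarith)
      rw [h] at this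
      linarith
  have hx10 : (0:ℝ) < x1 := by linarith
  have hJ'x1 : J' m x1 ≤ 0 :=
    deriv_nonpos_of_lt h2x1 (hasDerivAt_J m x1)
      (fun y h2y hyx1 => lt_of_le_of_lt hJx1 (hpos_lt y h2y hyx1))
  have hZx1 : Z m x1 ≤ 0 := by
    rw [Z_eq m hx10.ne']
    exact mul_nonpos_of_nonneg_of_nonpos hx10.le hJ'x1
  have hx1b : x1 ≤ (m:ℝ) + 1/2 := le_trans hx1x hxb
  have hZmono : ∀ b : ℝ, b ≤ (m:ℝ) → b ≤ x1 → MonotoneOn (Z m) (Icc 2 b) := by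
    intro b hbm hbx1
    apply monotoneOn_of_deriv_nonneg (convex_Icc _ _) ((cont_Z m).continuousOn)
    · intro y hy
      rw [interior_Icc] at hy
      exact (hasDerivAt_Z m (ne_of_gt (lt_trans two_pos hy.1))).differentiableAt.differentiableWithinAt
    · intro y hy
      rw [interior_Icc] at hy
      have hy0 : (0:ℝ) < y := lt_trans two_pos hy.1
      rw [(hasDerivAt_Z m hy0.ne').deriv]
      apply mul_nonneg
      · rw [sub_nonneg, le_div_iff₀ hy0]
        have hym : y ≤ (m:ℝ) := le_trans hy.2.le hbm
        nlinarith
      · exact (hpos_all y hy0 (lt_of_lt_of_le hy.2 hbx1)).le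
  rcases le_or_gt x1 (m:ℝ) with hcase|hcase
  · have hmono := hZmono x1 hcase (le_refl x1)
    have hle : Z m 2 ≤ Z m x1 :=
      hmono ⟨le_refl 2, h2x1.le⟩ ⟨h2x1.le, le_refl x1⟩ h2x1.le
    linarith [Z_two_pos m (by omega)]
  · have h2m : (2:ℝ) ≤ (m:ℝ) := by linarith
    have hmono := hZmono (m:ℝ) (le_refl _) hcase.le
    have hZm : 0 < Z m (m:ℝ) := by
      have hle : Z m 2 ≤ Z m (m:ℝ) :=
        hmono ⟨le_refl 2, h2m⟩ ⟨h2m, le_refl _⟩ h2m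
      linarith [Z_two_pos m (by omega)]
    have hpi := Real.pi_gt_three
    have hWmono : MonotoneOn (W m) (Icc (m:ℝ) x1) := by
      apply monotoneOn_of_deriv_nonneg (convex_Icc _ _) ((cont_W m).continuousOn)
      · intro y hy
        rw [interior_Icc] at hy
        have hy0 : (0:ℝ) < y := by linarith [hy.1]
        exact (hasDerivAt_W m hy0.ne').differentiableAt.differentiableWithinAt
      · intro y hy
        rw [interior_Icc] at hy
        have hy0 : (0:ℝ) < y := by linarith [hy.1]
        rw [(hasDerivAt_W m hy0.ne').deriv]
        have harg0 : 0 ≤ (y-(m:ℝ))/2 := by linarith [hy.1]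
        have harg1 : (y-(m:ℝ))/2 ≤ 1/4 := by
          have : y ≤ (m:ℝ) + 1/2 := by linarith [hy.2, hx1b]
          linarith
        have hsin : 0 ≤ Real.sin ((y-(m:ℝ))/2) :=
          Real.sin_nonneg_of_nonneg_of_le_pi harg0 (by linarith)
        have hcos : 0 ≤ Real.cos ((y-(m:ℝ))/2) :=
          Real.cos_nonneg_of_mem_Icc ⟨by linarith, by linarith⟩
        apply mul_nonneg (hpos_all y hy0 hy.2).le
        have hquad : 0 ≤ (m:ℝ)^2/y - (3/4)*y := by
          rw [sub_nonneg, le_div_iff₀ hy0]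
          have : y ≤ (m:ℝ) + 1/2 := by linarith [hy.2, hx1b]
          nlinarith
        have h5 := mul_nonneg hquad hcos
        linarith
    have hWend : W m (m:ℝ) ≤ W m x1 :=
      hWmono ⟨le_refl _, hcase.le⟩ ⟨hcase.le, le_refl _⟩ hcase.le
    have hWm : W m (m:ℝ) = Z m (m:ℝ) := by
      rw [W]
      rw [sub_self, zero_div, Real.cos_zero, Real.sin_zero]
      ring
    have hWx1 : W m x1 ≤ 0 := by
      rw [W]
      have harg0 : 0 ≤ (x1-(m:ℝ))/2 := by linarith
      have harg1 : (x1-(m:ℝ))/2 ≤ 1/4 := by linarith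
      have hsin : 0 ≤ Real.sin ((x1-(m:ℝ))/2) :=
        Real.sin_nonneg_of_nonneg_of_le_pi harg0 (by linarith)
      have hcos : 0 ≤ Real.cos ((x1-(m:ℝ))/2) :=
        Real.cos_nonneg_of_mem_Icc ⟨by linarith, by linarith⟩
      have t1 : Z m x1 * Real.cos ((x1-(m:ℝ))/2) ≤ 0 :=
        mul_nonpos_of_nonpos_of_nonneg hZx1 hcos
      have t2 : x1/2 * Real.sin ((x1-(m:ℝ))/2) * J m x1 ≤ 0 :=
        mul_nonpos_of_nonneg_of_nonpos (by positivity) hJx1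
      linarith
    linarith

lemma besselJ_eq (m : ℕ) {x : ℝ} (hx : 0 < x) : besselJ (m:ℝ) x = J m x := by
  rw [besselJ, J]
  apply tsum_congr
  intro k
  have h1 : Real.Gamma ((m:ℝ) + (k:ℝ) + 1) = ((m+k).factorial : ℝ) := by
    rw [show (m:ℝ) + (k:ℝ) + 1 = ((m+k:ℕ):ℝ) + 1 by push_cast; ring]
    exact Real.Gamma_nat_eq_factorial (m+k)
  have h2 : (x/2) ^ (2*(k:ℝ) + (m:ℝ)) = (x/2)^(2*k+m : ℕ) := by
    rw [show 2*(k:ℝ) + (m:ℝ) = ((2*k+m:ℕ):ℝ) by push_cast; ring]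
    rw [Real.rpow_natCast]
  rw [h1, h2, c, div_pow]
  have h3 : (2:ℝ)^(2*k+m) ≠ 0 := by positivity
  field_simp

lemma besselJDeriv_eq (m : ℕ) {x : ℝ} (hx : 0 < x) : besselJDeriv (m:ℝ) x = J' m x := by
  rw [besselJDeriv]
  have hev : besselJ (m:ℝ) =ᶠ[𝓝 x] J m := by
    filter_upwards [Ioi_mem_nhds hx] with y hy
    exact besselJ_eq m hy
  rw [hev.deriv_eq]
  exact (hasDerivAt_J m x).deriv

noncomputable def P (m : ℕ) (y : ℝ) : ℝ :=
  y * ((J (m+1) y)^2 + (J m y)^2) - (2*(m:ℝ)+1) * J m y * J (m+1) y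

lemma cont_P (m : ℕ) : Continuous (P m) := by
  apply Continuous.sub
  · exact continuous_id.mul (((cont_J (m+1)).pow 2).add ((cont_J m).pow 2))
  · exact (continuous_const.mul (cont_J m)).mul (cont_J (m+1))

lemma hasDerivAt_P (m : ℕ) {y : ℝ} (hy : y ≠ 0) :
    HasDerivAt (P m) ((2*(m:ℝ)+1)/y * (J m y * J (m+1) y)) y := by
  have hA := hasDerivAt_J m y
  have hB := hasDerivAt_J (m+1) y
  have hsq : HasDerivAt (fun z => (J (m+1) z)^2 + (J m z)^2)
      ((J' (m+1) y * J (m+1) y + J (m+1) y * J' (m+1) y)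
        + (J' m y * J m y + J m y * J' m y)) y := by
    have := (hB.mul hB).add (hA.mul hA)
    refine this.congr_of_eventuallyEq (Filter.Eventually.of_forall fun z => ?_)
    simp only [Pi.add_apply, Pi.mul_apply]; ring
  have h1 := ((hasDerivAt_id y).mul hsq).sub ((hA.const_mul (2*(m:ℝ)+1)).mul hB)
  refine h1.congr_deriv ?_
  simp only [id]
  rw [J'_eq m y hy, J'_eq₂ m y hy]
  field_simp
  ring

lemma g_zero_succ (m : ℕ) (x : ℝ) :
    g (m+1) x 0 = g m x 0 * x / (2*((m:ℝ)+1)) := by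
  rw [g_zero, g_zero]
  have hfs : (((m+1).factorial:ℕ):ℝ) = ((m:ℝ)+1) * m.factorial := by
    push_cast [Nat.factorial_succ]; ring
  rw [pow_succ, pow_succ, hfs, div_mul_eq_mul_div, div_div]
  congr 1
  ring

lemma series_facts (m : ℕ) {x : ℝ} (hx : 0 < x) (hxh : x ≤ 1/2) :
    (2*(m:ℝ)+1) * J (m+1) x < x * J m x ∧ J (m+1) x < J m x := by
  have hq : x^2 < 4*((m:ℝ)+1) := by nlinarith [Nat.cast_nonneg (α := ℝ) m]
  have hq' : x^2 < 4*(((m+1:ℕ):ℝ)+1) := by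
    push_cast; nlinarith [Nat.cast_nonneg (α := ℝ) m]
  have hmr : (0:ℝ) ≤ m := Nat.cast_nonneg m
  have hJm := (J_bounds m hx hq).1
  have hJm1 := (J_bounds (m+1) hx hq').2
  rw [g_zero_succ] at hJm1
  set G0 := g m x 0 with hG0
  have hG0pos : 0 < G0 := g_pos m 0 hx
  have hq96 : x^2/(4*((m:ℝ)+1)) ≤ 1/16 := by
    rw [div_le_div_iff₀ (by positivity) (by norm_num)]
    nlinarith
  constructor
  · have key : (2*(m:ℝ)+1) * (G0 * x / (2*((m:ℝ)+1))) < x * (G0 * (1 - x^2/(4*((m:ℝ)+1)))) := by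
      have hx3 : 0 < G0 * x * (2 - x^2) := by
        apply mul_pos (mul_pos hG0pos hx)
        nlinarith
      have e : x*(G0*(1 - x^2/(4*((m:ℝ)+1)))) - (2*(m:ℝ)+1)*(G0*x/(2*((m:ℝ)+1)))
          = G0 * x * (2 - x^2) / (4*((m:ℝ)+1)) := by
        field_simp
        ring
      have := div_pos hx3 (show (0:ℝ) < 4*((m:ℝ)+1) by positivity)
      linarith
    calc (2*(m:ℝ)+1) * J (m+1) x ≤ (2*(m:ℝ)+1) * (G0 * x / (2*((m:ℝ)+1))) := by
          apply mul_le_mul_of_nonneg_left hJm1 (by linarith)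
    _ < x * (G0 * (1 - x^2/(4*((m:ℝ)+1)))) := key
    _ ≤ x * J m x := by apply mul_le_mul_of_nonneg_left hJm hx.le
  · have key : G0 * x / (2*((m:ℝ)+1)) < G0 * (1 - x^2/(4*((m:ℝ)+1))) := by
      have hx4 : 0 < G0 * (4*((m:ℝ)+1) - x^2 - 2*x) := by
        apply mul_pos hG0pos
        nlinarith
      have e2 : G0*(1 - x^2/(4*((m:ℝ)+1))) - G0*x/(2*((m:ℝ)+1))
          = G0*(4*((m:ℝ)+1) - x^2 - 2*x)/(4*((m:ℝ)+1)) := by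
        field_simp
        ring
      have := div_pos hx4 (show (0:ℝ) < 4*((m:ℝ)+1) by positivity)
      linarith
    linarith

lemma P_pos_small (m : ℕ) {x : ℝ} (hx : 0 < x) (hxh : x ≤ 1/2) : 0 < P m x := by
  have hmr : (0:ℝ) ≤ m := Nat.cast_nonneg m
  have hA : 0 < J m x := POS m x hx (by linarith)
  have hB : 0 < J (m+1) x := POS (m+1) x hx (by push_cast; linarith)
  have hs := (series_facts m hx hxh).1
  have t : ((2*(m:ℝ)+1) * J (m+1) x) * J m x < (x * J m x) * J m x :=
    mul_lt_mul_of_pos_right hs hA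
  rw [P]
  nlinarith [mul_nonneg hx.le (sq_nonneg (J (m+1) x))]

lemma P_pos (m : ℕ) (x : ℝ) (hx : 0 < x) (hxb : x ≤ (m:ℝ) + 1/2) : 0 < P m x := by
  rcases le_or_gt x (1/2) with h|h
  · exact P_pos_small m hx h
  · have hP0 : 0 < P m (1/2) := P_pos_small m (by norm_num) (le_refl _)
    have hmono : StrictMonoOn (P m) (Icc (1/2) x) := by
      apply strictMonoOn_of_deriv_pos (convex_Icc _ _) (cont_P m).continuousOn
      intro y hy
      rw [interior_Icc] at hy
      have hy0 : (0:ℝ) < y := by linarith [hy.1]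
      rw [(hasDerivAt_P m hy0.ne').deriv]
      have hyb : y ≤ (m:ℝ) + 1/2 := by linarith [hy.2]
      have hA := POS m y hy0 hyb
      have hB := POS (m+1) y hy0 (by push_cast; linarith)
      positivity
    have := hmono ⟨le_refl _, h.le⟩ ⟨h.le, le_refl _⟩ h
    linarith

lemma Jsucc_le (m : ℕ) (x : ℝ) (hx : 0 < x) (hxb : x ≤ (m:ℝ) + 1/2) :
    J (m+1) x ≤ J m x := by
  by_contra h
  push_neg at h
  rcases le_or_gt x (1/2) with hh|hh
  · linarith [(series_facts m hx hh).2]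
  · set Gf := fun y => J m y - J (m+1) y with hGf
    have hc : ContinuousOn Gf (Icc (1/2) x) := ((cont_J m).sub (cont_J (m+1))).continuousOn
    have hG1 : 0 < Gf (1/2) := by
      have := (series_facts m (by norm_num : (0:ℝ)<1/2) (le_refl _)).2
      simp only [hGf]
      linarith
    have hGx : Gf x < 0 := by simp only [hGf]; linarith
    have h0mem : (0:ℝ) ∈ Icc (Gf x) (Gf (1/2)) := ⟨hGx.le, hG1.le⟩
    obtain ⟨y, hy, hGy⟩ := intermediate_value_Icc' hh.le hc h0mem
    have hy0 : (0:ℝ) < y := lt_of_lt_of_le (by norm_num) hy.1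
    have hyb : y ≤ (m:ℝ)+1/2 := le_trans hy.2 hxb
    have hA := POS m y hy0 hyb
    have hPy := P_pos m y hy0 hyb
    have hEq : J (m+1) y = J m y := by
      have : J m y - J (m+1) y = 0 := hGy
      linarith
    rw [P, hEq] at hPy
    nlinarith [mul_pos hA hA]

end Stmt7

/-- For every integer `m ≥ 0` and `0 < x ≤ m + 1/2`:
`(√((2m+1)² - 4x²) - 1)/(2x) ≤ J_m'(x)/J_m(x) < m/x`. -/
theorem stmt7 (m : ℕ) (x : ℝ) (hx0 : 0 < x) (hx : x ≤ (m:ℝ) + 1/2) :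
    (Real.sqrt ((2*(m:ℝ)+1)^2 - 4*x^2) - 1) / (2*x) ≤ besselJDeriv m x / besselJ m x ∧
    besselJDeriv m x / besselJ m x < (m:ℝ) / x := by
  open Stmt7 in
  have hmr : (0:ℝ) ≤ m := Nat.cast_nonneg m
  have hA : 0 < Stmt7.J m x := Stmt7.POS m x hx0 hx
  have hB : 0 < Stmt7.J (m+1) x := Stmt7.POS (m+1) x hx0 (by push_cast; linarith)
  have hP := Stmt7.P_pos m x hx0 hx
  have hle := Stmt7.Jsucc_le m x hx0 hx
  rw [Stmt7.besselJDeriv_eq m hx0, Stmt7.besselJ_eq m hx0, Stmt7.J'_eq m x hx0.ne']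
  set s := Stmt7.J (m+1) x / Stmt7.J m x with hs
  have hratio : ((m:ℝ)/x * Stmt7.J m x - Stmt7.J (m+1) x) / Stmt7.J m x = (m:ℝ)/x - s := by
    rw [sub_div, mul_div_assoc, div_self hA.ne', mul_one, hs]
  rw [hratio]
  have hspos : 0 < s := div_pos hB hA
  have hs1 : s ≤ 1 := by rw [hs, div_le_one hA]; exact hle
  constructor
  · have hAge : 0 ≤ (2*(m:ℝ)+1) - 2*x*s := by nlinarith
    have hkey : x*s^2 + x - (2*(m:ℝ)+1)*s = Stmt7.P m x / (Stmt7.J m x)^2 := by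
      rw [Stmt7.P, hs]
      field_simp
    have hPpos : 0 < x*s^2 + x - (2*(m:ℝ)+1)*s := by
      rw [hkey]
      exact div_pos hP (pow_pos hA 2)
    have hsq : (2*(m:ℝ)+1)^2 - 4*x^2 ≤ ((2*(m:ℝ)+1) - 2*x*s)^2 := by
      nlinarith [hPpos, hx0]
    have hsqrt : Real.sqrt ((2*(m:ℝ)+1)^2 - 4*x^2) ≤ (2*(m:ℝ)+1) - 2*x*s := by
      calc Real.sqrt ((2*(m:ℝ)+1)^2 - 4*x^2)
          ≤ Real.sqrt (((2*(m:ℝ)+1) - 2*x*s)^2) := Real.sqrt_le_sqrt hsq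
      _ = (2*(m:ℝ)+1) - 2*x*s := Real.sqrt_sq hAge
    have h2x : (0:ℝ) < 2*x := by linarith
    have hstep : (Real.sqrt ((2*(m:ℝ)+1)^2 - 4*x^2) - 1)/(2*x)
        ≤ ((2*(m:ℝ)+1) - 2*x*s - 1)/(2*x) := by
      apply (div_le_div_iff_of_pos_right h2x).2
      linarith
    have heq : ((2*(m:ℝ)+1) - 2*x*s - 1)/(2*x) = (m:ℝ)/x - s := by
      field_simp
      ring
    rw [← heq]
    exact hstep
  · linarith
end

section
/- For all reals τ₁, τ₂ with 0 < τ₂ < τ₁ < 1 there exist a constant C > 0 and an integer M such that for all integers m ≥ M, ∫_{τ₂}^{τ₁} J_m(m r)² r dr ≥ (C/m) · J_m(m τ₁)². -/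
open MeasureTheory Filter Set

/-! ### Auxiliary power-series development of the Bessel function -/

noncomputable def besselBC (n k : ℕ) : ℝ := (-1)^k / ((k.factorial : ℝ) * ((n+k).factorial : ℝ))

noncomputable def besselG (n : ℕ) (t : ℝ) : ℝ := ∑' k : ℕ, besselBC n k * t ^ k

lemma abs_bc_mul_le (n k : ℕ) (t : ℝ) : |besselBC n k * t ^ k| ≤ |t| ^ k / k.factorial := by
  have h1 : (1:ℝ) ≤ ((n+k).factorial : ℝ) := by exact_mod_cast (n+k).factorial_pos
  have h2 : (0:ℝ) < (k.factorial : ℝ) := by exact_mod_cast k.factorial_pos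
  have habs : |besselBC n k| = 1 / ((k.factorial : ℝ) * ((n+k).factorial : ℝ)) := by
    rw [besselBC, abs_div]
    simp [abs_of_pos (show (0:ℝ) < (k.factorial : ℝ) * ((n+k).factorial : ℝ) by positivity)]
  rw [abs_mul, abs_pow, habs]
  rw [div_mul_eq_mul_div, one_mul, div_le_div_iff₀ (by positivity) h2]
  nlinarith [pow_nonneg (abs_nonneg t) k, mul_nonneg (pow_nonneg (abs_nonneg t) k) h2.le,
    mul_le_mul_of_nonneg_left h1 (mul_nonneg (pow_nonneg (abs_nonneg t) k) h2.le)]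

lemma summable_bc (n : ℕ) (t : ℝ) : Summable (fun k => besselBC n k * t ^ k) := by
  apply Summable.of_abs
  apply Summable.of_nonneg_of_le (fun k => abs_nonneg _) (fun k => abs_bc_mul_le n k t)
  exact Real.summable_pow_div_factorial |t|

lemma G_zero (n : ℕ) : besselG n 0 = 1 / (n.factorial : ℝ) := by
  rw [besselG, tsum_eq_single 0]
  · simp [besselBC]
  · intro k hk
    simp [zero_pow hk]

lemma G_def (n : ℕ) (t : ℝ) : besselG n t = ∑' k : ℕ, besselBC n k * t ^ k := rfl

lemma bc_def (n k : ℕ) : besselBC n k = (-1)^k / ((k.factorial : ℝ) * ((n+k).factorial : ℝ)) := rfl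

lemma abs_bc_le (n k : ℕ) : |besselBC n k| ≤ 1 / k.factorial := by
  have := abs_bc_mul_le n k 1
  simpa using this

lemma bc_succ (n k : ℕ) : besselBC n (k+1) * ((k:ℝ)+1) = -(besselBC (n+1) k) := by
  rw [bc_def, bc_def]
  have h1 : ((k+1).factorial : ℝ) = ((k:ℝ)+1) * (k.factorial : ℝ) := by
    rw [Nat.factorial_succ]; push_cast; ring
  have h2 : (n + (k+1)) = ((n+1) + k) := by omega
  rw [h2, h1, pow_succ]
  have hk : ((k:ℝ)+1) ≠ 0 := by positivity
  have hkf : (k.factorial : ℝ) ≠ 0 := by exact_mod_cast k.factorial_pos.ne'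
  have hnf : (((n+1)+k).factorial : ℝ) ≠ 0 := by exact_mod_cast ((n+1)+k).factorial_pos.ne'
  field_simp

lemma summable_deriv_bc (n : ℕ) (t : ℝ) :
    Summable (fun k : ℕ => besselBC n k * ((k:ℝ) * t ^ (k-1))) := by
  apply Summable.of_abs
  refine Summable.of_nonneg_of_le (f := fun k : ℕ => (k:ℝ) * |t|^(k-1) / (k.factorial : ℝ))
    (fun k => abs_nonneg _) ?_ ?_
  · intro k
    rw [abs_mul, abs_mul, abs_pow, Nat.abs_cast]
    calc |besselBC n k| * ((k:ℝ) * |t|^(k-1)) ≤ (1/k.factorial) * ((k:ℝ) * |t|^(k-1)) := by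
          gcongr
          all_goals first | positivity | exact abs_bc_le n k
      _ = (k:ℝ) * |t|^(k-1) / k.factorial := by ring
  · rw [← summable_nat_add_iff 1]
    apply Summable.congr (Real.summable_pow_div_factorial |t|)
    intro k
    simp only [Nat.add_sub_cancel, Nat.factorial_succ]
    have h : (0:ℝ) < (k.factorial:ℝ) := by exact_mod_cast k.factorial_pos
    push_cast
    field_simp

lemma hasDerivAt_G (n : ℕ) (t : ℝ) : HasDerivAt (besselG n) (-(besselG (n+1) t)) t := by
  have key : HasDerivAt (fun y => ∑' k : ℕ, besselBC n k * y ^ k)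
      (∑' k : ℕ, besselBC n k * ((k:ℝ) * t ^ (k-1))) t := by
    set R := |t| + 1 with hR
    apply hasDerivAt_tsum_of_isPreconnected
      (u := fun k : ℕ => (k:ℝ) * R^(k-1) / (k.factorial : ℝ))
      (g := fun (k : ℕ) y => besselBC n k * y ^ k)
      (g' := fun (k : ℕ) y => besselBC n k * ((k:ℝ) * y ^ (k-1)))
      (t := Ioo (-R) R) (y₀ := 0)
    · rw [← summable_nat_add_iff 1]
      apply Summable.congr (Real.summable_pow_div_factorial R)
      intro k
      simp only [Nat.add_sub_cancel, Nat.factorial_succ]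
      have h : (0:ℝ) < (k.factorial:ℝ) := by exact_mod_cast k.factorial_pos
      have hRp : (0:ℝ) < R := by positivity
      push_cast
      field_simp
    · exact isOpen_Ioo
    · exact (convex_Ioo _ _).isPreconnected
    · intro k y _
      simpa using ((hasDerivAt_pow k y).const_mul (besselBC n k))
    · intro k y hy
      have hyR : |y| ≤ R := by
        rw [abs_le]; constructor <;> [exact hy.1.le; exact hy.2.le]
      have hR0 : (0:ℝ) ≤ R := by positivity
      rw [Real.norm_eq_abs, abs_mul, abs_mul, abs_pow, Nat.abs_cast]
      have h1 : |besselBC n k| ≤ 1 / k.factorial := abs_bc_le n k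
      calc |besselBC n k| * ((k:ℝ) * |y|^(k-1)) ≤ (1/k.factorial) * ((k:ℝ) * R^(k-1)) := by
            gcongr
            all_goals first | positivity | exact h1 | exact hyR | exact abs_nonneg _
        _ = (k:ℝ) * R^(k-1) / k.factorial := by ring
    · exact ⟨by nlinarith [abs_nonneg t], by nlinarith [abs_nonneg t]⟩
    · exact summable_bc n 0
    · exact ⟨by nlinarith [neg_abs_le t], by nlinarith [le_abs_self t]⟩
  have heq : (∑' k : ℕ, besselBC n k * ((k:ℝ) * t ^ (k-1))) = -(besselG (n+1) t) := by
    rw [Summable.tsum_eq_zero_add (summable_deriv_bc n t)]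
    simp only [Nat.cast_zero, zero_mul, mul_zero, zero_add]
    rw [G_def, ← tsum_neg]
    congr 1
    funext k
    rw [Nat.add_sub_cancel]
    push_cast
    calc besselBC n (k+1) * (((k:ℝ)+1) * t^k) = (besselBC n (k+1) * ((k:ℝ)+1)) * t^k := by ring
      _ = -(besselBC (n+1) k * t^k) := by rw [bc_succ]; ring
  have : besselG n = fun y => ∑' k : ℕ, besselBC n k * y ^ k := by funext y; exact G_def n y
  rw [this, ← heq] at *
  exact key

lemma bc_rec (n k : ℕ) : ((n:ℝ)+1) * besselBC (n+1) (k+1) - besselBC n (k+1) = besselBC (n+2) k := by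
  rw [bc_def, bc_def, bc_def]
  have e1 : n + 1 + (k + 1) = n + k + 2 := by omega
  have e2 : n + (k + 1) = n + k + 1 := by omega
  have e3 : n + 2 + k = n + k + 2 := by omega
  rw [e1, e2, e3]
  have f1 : ((n+k+2).factorial : ℝ) = ((n:ℝ)+(k:ℝ)+2) * ((n+k+1).factorial : ℝ) := by
    rw [show n+k+2 = (n+k+1)+1 by omega, Nat.factorial_succ]; push_cast; ring
  have f2 : ((k+1).factorial : ℝ) = ((k:ℝ)+1) * (k.factorial : ℝ) := by
    rw [Nat.factorial_succ]; push_cast; ring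
  have hk : ((k:ℝ)+1) ≠ 0 := by positivity
  have hkf : (k.factorial : ℝ) ≠ 0 := by exact_mod_cast k.factorial_pos.ne'
  have hnk1 : ((n+k+1).factorial : ℝ) ≠ 0 := by exact_mod_cast (n+k+1).factorial_pos.ne'
  have hnk2 : ((n:ℝ)+(k:ℝ)+2) ≠ 0 := by positivity
  rw [f1, f2]
  simp only [pow_succ]
  field_simp
  ring

lemma G_rec (n : ℕ) (t : ℝ) : ((n:ℝ)+1) * besselG (n+1) t - besselG n t = t * besselG (n+2) t := by
  have h1 : ((n:ℝ)+1) * besselG (n+1) t - besselG n t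
      = ∑' k : ℕ, (((n:ℝ)+1) * besselBC (n+1) k - besselBC n k) * t ^ k := by
    rw [G_def, G_def, ← tsum_mul_left,
      ← Summable.tsum_sub ((summable_bc (n+1) t).mul_left _) (summable_bc n t)]
    congr 1; funext k; ring
  have hs : Summable (fun k : ℕ => (((n:ℝ)+1) * besselBC (n+1) k - besselBC n k) * t ^ k) := by
    apply Summable.congr (((summable_bc (n+1) t).mul_left ((n:ℝ)+1)).sub (summable_bc n t))
    intro k; ring
  rw [h1, Summable.tsum_eq_zero_add hs]
  have h0 : (((n:ℝ)+1) * besselBC (n+1) 0 - besselBC n 0) * t ^ 0 = 0 := by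
    rw [bc_def, bc_def]; simp [Nat.factorial_succ]
    push_cast
    have : ((n.factorial : ℝ)) ≠ 0 := by exact_mod_cast n.factorial_pos.ne'
    field_simp
    ring
  rw [h0, zero_add, G_def, ← tsum_mul_left]
  congr 1; funext k
  rw [← bc_rec n k]
  ring

lemma besselJ_eq (n : ℕ) (x : ℝ) (hx : 0 < x) :
    besselJ n x = (x/2)^n * besselG n (x^2/4) := by
  rw [besselJ, G_def, ← tsum_mul_left]
  congr 1; funext k
  have hg : Real.Gamma ((n:ℝ) + (k:ℝ) + 1) = ((n+k).factorial : ℝ) := by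
    rw [show ((n:ℝ) + (k:ℝ) + 1) = ((n+k : ℕ) : ℝ) + 1 by push_cast; ring]
    exact_mod_cast Real.Gamma_nat_eq_factorial (n+k)
  have hx2 : (0:ℝ) < x/2 := by linarith
  have hrp : (x / 2) ^ (2 * (k : ℝ) + (n:ℝ)) = (x/2)^(2*k+n : ℕ) := by
    rw [show (2 * (k : ℝ) + (n:ℝ)) = ((2*k+n : ℕ) : ℝ) by push_cast; ring,
      Real.rpow_natCast]
  rw [hg, hrp, bc_def]
  have : (x/2)^(2*k+n : ℕ) = (x/2)^n * (x^2/4)^k := by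
    rw [pow_add, mul_comm]
    congr 1
    rw [pow_mul]
    congr 1
    ring
  rw [this]
  ring

lemma contG (n : ℕ) : Continuous (besselG n) := by
  rw [continuous_iff_continuousAt]
  exact fun t => (hasDerivAt_G n t).differentiableAt.continuousAt

lemma G_pos (n : ℕ) (hn : 1 ≤ n) : ∀ t, 0 ≤ t → t ≤ (n:ℝ)^2/4 → 0 < besselG n t := by
  by_contra hcon
  push_neg at hcon
  obtain ⟨t₁, ht₁0, ht₁n, ht₁⟩ := hcon
  set S : Set ℝ := {t | t ∈ Icc (0:ℝ) ((n:ℝ)^2/4) ∧ besselG n t ≤ 0} with hSdef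
  have hS : S.Nonempty := ⟨t₁, ⟨ht₁0, ht₁n⟩, ht₁⟩
  have hSb : BddBelow S := ⟨0, fun t ht => ht.1.1⟩
  have hScl : IsClosed S := by
    have : S = Icc (0:ℝ) ((n:ℝ)^2/4) ∩ (besselG n) ⁻¹' (Iic 0) := rfl
    rw [this]
    exact isClosed_Icc.inter (isClosed_Iic.preimage (contG n))
  set t₀ := sInf S with ht₀def
  have ht₀S : t₀ ∈ S := hScl.csInf_mem hS hSb
  have ht₀0 : 0 ≤ t₀ := ht₀S.1.1
  have ht₀n : t₀ ≤ (n:ℝ)^2/4 := ht₀S.1.2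
  have hGt₀ : besselG n t₀ ≤ 0 := ht₀S.2
  have ht₀pos : 0 < t₀ := by
    rcases ht₀0.lt_or_eq with h | h
    · exact h
    · exfalso
      have : besselG n 0 ≤ 0 := by rw [← h] at hGt₀; exact hGt₀
      rw [G_zero] at this
      have : (0:ℝ) < 1 / (n.factorial : ℝ) := by positivity
      linarith
  have hlt : ∀ t, 0 ≤ t → t < t₀ → 0 < besselG n t := by
    intro t ht0 htt
    by_contra h
    push_neg at h
    have : t ∈ S := ⟨⟨ht0, le_trans htt.le ht₀n⟩, h⟩
    exact absurd (csInf_le hSb this) (not_le.mpr htt)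
  -- the point x₀ = 2√t₀
  set x₀ := 2 * Real.sqrt t₀ with hx₀def
  have hx₀pos : 0 < x₀ := by positivity
  have hx₀sq : x₀^2/4 = t₀ := by
    rw [hx₀def, mul_pow, Real.sq_sqrt ht₀0]; ring
  have hx₀n : x₀ ≤ n := by
    have h1 : Real.sqrt t₀ ≤ Real.sqrt ((n:ℝ)^2/4) := Real.sqrt_le_sqrt ht₀n
    have h2 : Real.sqrt ((n:ℝ)^2/4) = (n:ℝ)/2 := by
      rw [show ((n:ℝ)^2/4) = ((n:ℝ)/2)^2 by ring, Real.sqrt_sq (by positivity)]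
    rw [hx₀def]; linarith [h1.trans_eq h2]
  -- the functions B and W
  set B : ℝ → ℝ := fun x => (x/2)^n * besselG n (x^2/4) with hBdef
  set W : ℝ → ℝ := fun x => (n:ℝ) * B x - (x^2/2) * (x/2)^n * besselG (n+1) (x^2/4) with hWdef
  -- derivative facts
  have hq : ∀ x : ℝ, (x/2)^n = (x/2)^(n-1) * (x/2) := by
    intro x; rw [← pow_succ]; congr 1; omega
  have hderivB : ∀ x : ℝ, HasDerivAt B
      (((n:ℝ) * (x/2)^(n-1) * (1/2)) * besselG n (x^2/4)
        + (x/2)^n * (-(besselG (n+1) (x^2/4)) * (x/2))) x := by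
    intro x
    have h1 : HasDerivAt (fun x : ℝ => (x/2)^n) ((n:ℝ) * (x/2)^(n-1) * (1/2)) x := by
      have := (hasDerivAt_pow n (x/2)).comp x ((hasDerivAt_id x).div_const 2)
      simpa [Function.comp_def] using this
    have h2 : HasDerivAt (fun x : ℝ => besselG n (x^2/4)) (-(besselG (n+1) (x^2/4)) * (x/2)) x := by
      have hin : HasDerivAt (fun x : ℝ => x^2/4) (x/2) x := by
        have := (hasDerivAt_pow 2 x).div_const 4
        simpa using this.congr_deriv (by ring)
      exact (hasDerivAt_G n (x^2/4)).comp x hin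
    exact h1.mul h2
  have hxB' : ∀ x : ℝ, x * (((n:ℝ) * (x/2)^(n-1) * (1/2)) * besselG n (x^2/4)
        + (x/2)^n * (-(besselG (n+1) (x^2/4)) * (x/2))) = W x := by
    intro x
    rw [hWdef, hBdef]
    simp only
    rw [hq x]
    ring
  have hderivW : ∀ x : ℝ, x ≠ 0 → HasDerivAt W (((n:ℝ)^2/x - x) * B x) x := by
    intro x hx
    have h1 : HasDerivAt (fun x : ℝ => (x/2)^n) ((n:ℝ) * (x/2)^(n-1) * (1/2)) x := by
      have := (hasDerivAt_pow n (x/2)).comp x ((hasDerivAt_id x).div_const 2)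
      simpa [Function.comp_def] using this
    have hin : HasDerivAt (fun x : ℝ => x^2/4) (x/2) x := by
      have := (hasDerivAt_pow 2 x).div_const 4
      simpa using this.congr_deriv (by ring)
    have h2 : HasDerivAt (fun x : ℝ => besselG n (x^2/4)) (-(besselG (n+1) (x^2/4)) * (x/2)) x :=
      by exact (hasDerivAt_G n (x^2/4)).comp x hin
    have h3 : HasDerivAt (fun x : ℝ => besselG (n+1) (x^2/4)) (-(besselG (n+2) (x^2/4)) * (x/2)) x :=
      by exact (hasDerivAt_G (n+1) (x^2/4)).comp x hin
    have h4 : HasDerivAt (fun x : ℝ => x^2/2) x x := by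
      have := (hasDerivAt_pow 2 x).div_const 2
      simpa using this.congr_deriv (by ring)
    have hB : HasDerivAt B (((n:ℝ) * (x/2)^(n-1) * (1/2)) * besselG n (x^2/4)
        + (x/2)^n * (-(besselG (n+1) (x^2/4)) * (x/2))) x := hderivB x
    have hW : HasDerivAt W
        ((n:ℝ) * (((n:ℝ) * (x/2)^(n-1) * (1/2)) * besselG n (x^2/4)
          + (x/2)^n * (-(besselG (n+1) (x^2/4)) * (x/2)))
         - ((x * (x/2)^n + (x^2/2) * ((n:ℝ) * (x/2)^(n-1) * (1/2))) * besselG (n+1) (x^2/4)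
            + ((x^2/2) * (x/2)^n) * (-(besselG (n+2) (x^2/4)) * (x/2)))) x := by
      exact (hB.const_mul ((n:ℝ))).sub (((h4.mul h1).mul h3))
    convert hW using 1
    -- algebraic identity using the recurrence
    have hrec := G_rec n (x^2/4)
    have hq' := hq x
    have hdiv : (n:ℝ)^2/x - x = ((n:ℝ)^2 - x^2)/x := by field_simp
    rw [hBdef]
    simp only
    rw [hdiv, div_mul_eq_mul_div, div_eq_iff hx]
    rw [hq']
    linear_combination (x * (x^2/2) * (x/2)^(n-1)) * hrec
  -- continuity
  have hBcont : Continuous B := by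
    rw [hBdef]
    exact ((continuous_id.div_const 2).pow n).mul
      ((contG n).comp ((continuous_pow 2).div_const 4))
  have hWcont : Continuous W := by
    rw [hWdef]
    exact (continuous_const.mul hBcont).sub
      ((((continuous_pow 2).div_const 2).mul ((continuous_id.div_const 2).pow n)).mul
        ((contG (n+1)).comp ((continuous_pow 2).div_const 4)))
  have hW0 : W 0 = 0 := by
    have hn0 : n ≠ 0 := by omega
    simp [hWdef, hBdef, zero_pow hn0]
  have hWmono : MonotoneOn W (Icc 0 x₀) := by
    apply monotoneOn_of_deriv_nonneg (convex_Icc _ _) hWcont.continuousOn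
    · intro x hx
      rw [interior_Icc] at hx
      exact ((hderivW x (ne_of_gt hx.1)).differentiableAt).differentiableWithinAt
    · intro x hx
      rw [interior_Icc] at hx
      rw [(hderivW x (ne_of_gt hx.1)).deriv]
      have hBpos : 0 < B x := by
        rw [hBdef]
        apply mul_pos (pow_pos (by linarith [hx.1]) n)
        apply hlt _ (by positivity)
        have : x^2 < x₀^2 := by nlinarith [hx.1, hx.2]
        nlinarith [hx₀sq]
      have hcoef : 0 ≤ (n:ℝ)^2/x - x := by
        rw [sub_nonneg, le_div_iff₀ hx.1]
        nlinarith [hx.2, hx₀n, hx.1]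
      exact mul_nonneg hcoef hBpos.le
  have hWnn : ∀ x ∈ Icc (0:ℝ) x₀, 0 ≤ W x := by
    intro x hx
    have := hWmono (left_mem_Icc.mpr hx₀pos.le) hx hx.1
    linarith [hW0]
  have hBmono : MonotoneOn B (Icc 0 x₀) := by
    apply monotoneOn_of_deriv_nonneg (convex_Icc _ _) hBcont.continuousOn
    · intro x hx
      exact (hderivB x).differentiableAt.differentiableWithinAt
    · intro x hx
      rw [interior_Icc] at hx
      rw [(hderivB x).deriv]
      have hW' := hWnn x ⟨hx.1.le, hx.2.le⟩
      have hxpos := hx.1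
      have heq := hxB' x
      rw [← heq] at hW'
      by_contra hneg
      push_neg at hneg
      have := mul_neg_of_pos_of_neg hxpos hneg
      linarith
  have h1 : B (x₀/2) ≤ B x₀ := by
    apply hBmono ⟨by positivity, by linarith⟩ ⟨by positivity, le_refl _⟩ (by linarith)
  have hB2pos : 0 < B (x₀/2) := by
    rw [hBdef]
    apply mul_pos (pow_pos (by positivity) n)
    apply hlt _ (by positivity)
    nlinarith [hx₀sq, ht₀pos]
  have hBx₀ : B x₀ ≤ 0 := by
    rw [hBdef]
    simp only
    rw [hx₀sq]
    exact mul_nonpos_of_nonneg_of_nonpos (pow_nonneg (by positivity) n) hGt₀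
  linarith

lemma G_anti (n : ℕ) : AntitoneOn (besselG n) (Icc 0 ((n:ℝ)^2/4)) := by
  apply antitoneOn_of_deriv_nonpos (convex_Icc _ _) (contG n).continuousOn
  · intro x _
    exact (hasDerivAt_G n x).differentiableAt.differentiableWithinAt
  · intro x hx
    rw [interior_Icc] at hx
    rw [(hasDerivAt_G n x).deriv]
    have : 0 < besselG (n+1) x := by
      apply G_pos (n+1) (by omega) x hx.1.le
      have hx2 := hx.2
      push_cast
      nlinarith [hx2, (Nat.cast_nonneg n : (0:ℝ) ≤ (n:ℝ))]
    linarith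



/-- For all `0 < τ₂ < τ₁ < 1` there exist `C > 0` and `M` such that for all `m ≥ M`,
`∫_{τ₂}^{τ₁} J_m(mr)² r dr ≥ (C/m) J_m(mτ₁)²`. -/
theorem stmt10 (τ₁ τ₂ : ℝ) (h2 : 0 < τ₂) (h21 : τ₂ < τ₁) (h1 : τ₁ < 1) :
    ∃ C : ℝ, 0 < C ∧ ∃ M : ℕ, ∀ m : ℕ, M ≤ m →
      (C / (m:ℝ)) * (besselJ m ((m:ℝ) * τ₁)) ^ 2
        ≤ ∫ r in τ₂..τ₁, (besselJ m ((m:ℝ) * r)) ^ 2 * r := by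
  have hτ₁pos : (0:ℝ) < τ₁ := lt_trans h2 h21
  have hτ21 : (0:ℝ) < τ₁ - τ₂ := by linarith
  refine ⟨τ₁*τ₂/8, by positivity, ⌈τ₁/(4*(τ₁-τ₂))⌉₊ + 1, ?_⟩
  intro m hm
  have hm1 : 1 ≤ m := le_trans (Nat.le_add_left 1 _) hm
  have hmR : (1:ℝ) ≤ (m:ℝ) := by exact_mod_cast hm1
  have hmpos : (0:ℝ) < (m:ℝ) := by linarith
  have hceil : τ₁/(4*(τ₁-τ₂)) ≤ (m:ℝ) := by
    have h1' : ((⌈τ₁/(4*(τ₁-τ₂))⌉₊ : ℕ) : ℝ) ≤ (m:ℝ) := by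
      exact_mod_cast le_trans (Nat.le_succ _) hm
    exact le_trans (Nat.le_ceil _) h1'
  set a : ℝ := τ₁ - τ₁/(4*(m:ℝ)) with ha_def
  have ha2 : τ₂ ≤ a := by
    have hstep : τ₁/(4*(m:ℝ)) ≤ τ₁-τ₂ := by
      rw [div_le_iff₀ (by positivity)]
      have h4m : τ₁ = τ₁/(4*(τ₁-τ₂)) * (4*(τ₁-τ₂)) := by field_simp
      calc τ₁ = τ₁/(4*(τ₁-τ₂)) * (4*(τ₁-τ₂)) := h4m
        _ ≤ (m:ℝ) * (4*(τ₁-τ₂)) := by gcongr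
        _ = (τ₁-τ₂) * (4*(m:ℝ)) := by ring
    rw [ha_def]; linarith
  have ha1 : a ≤ τ₁ := by
    have : 0 ≤ τ₁/(4*(m:ℝ)) := by positivity
    rw [ha_def]; linarith
  have hapos : 0 < a := lt_of_lt_of_le h2 ha2
  set J1 : ℝ := besselJ m ((m:ℝ)*τ₁) with hJ1def
  set t1 : ℝ := ((m:ℝ)*τ₁)^2/4 with ht1def
  have ht1n : t1 ≤ (m:ℝ)^2/4 := by
    rw [ht1def]
    have hsq : τ₁^2 ≤ 1 := by nlinarith
    nlinarith [mul_le_mul_of_nonneg_left hsq (by positivity : (0:ℝ) ≤ (m:ℝ)^2)]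
  have hg1 : 0 < besselG m t1 := G_pos m hm1 t1 (by rw [ht1def]; positivity) ht1n
  have e1 : J1 = ((m:ℝ)*τ₁/2)^m * besselG m t1 := besselJ_eq m _ (by positivity)
  have hJ1nn : 0 ≤ J1 := by rw [e1]; positivity
  -- pointwise key bound
  have key : ∀ r ∈ Icc a τ₁, (1/2) * J1^2 ≤ (besselJ m ((m:ℝ)*r))^2 := by
    intro r hr
    have hrpos : 0 < r := lt_of_lt_of_le hapos hr.1
    set tr : ℝ := ((m:ℝ)*r)^2/4 with htrdef
    have htr1 : tr ≤ t1 := by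
      rw [htrdef, ht1def]
      have hsq : r^2 ≤ τ₁^2 := by nlinarith [hr.2]
      nlinarith [mul_le_mul_of_nonneg_left hsq (by positivity : (0:ℝ) ≤ (m:ℝ)^2)]
    have er : besselJ m ((m:ℝ)*r) = ((m:ℝ)*r/2)^m * besselG m tr := besselJ_eq m _ (by positivity)
    have hganti : besselG m t1 ≤ besselG m tr :=
      G_anti m ⟨by rw [htrdef]; positivity, le_trans htr1 ht1n⟩
        ⟨by rw [ht1def]; positivity, ht1n⟩ htr1
    have hb : (r/τ₁)^m * ((m:ℝ)*τ₁/2)^m = ((m:ℝ)*r/2)^m := by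
      rw [← mul_pow]; congr 1; field_simp
    have hlow : (r/τ₁)^m * J1 ≤ besselJ m ((m:ℝ)*r) := by
      rw [e1, er, ← mul_assoc, hb]
      have : (0:ℝ) ≤ ((m:ℝ)*r/2)^m := by positivity
      exact mul_le_mul_of_nonneg_left hganti this
    have hlnn : 0 ≤ (r/τ₁)^m * J1 := mul_nonneg (by positivity) hJ1nn
    have hsq : ((r/τ₁)^m * J1)^2 ≤ (besselJ m ((m:ℝ)*r))^2 := pow_le_pow_left₀ hlnn hlow 2
    -- Bernoulli bound
    have hfrac : 1 - 1/(4*(m:ℝ)) ≤ r/τ₁ := by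
      rw [le_div_iff₀ hτ₁pos]
      have : (1 - 1/(4*(m:ℝ))) * τ₁ = τ₁ - τ₁/(4*(m:ℝ)) := by ring
      rw [this]
      exact hr.1
    have hfnn : (0:ℝ) ≤ 1 - 1/(4*(m:ℝ)) := by
      have : 1/(4*(m:ℝ)) ≤ 1 := by rw [div_le_one (by positivity)]; linarith
      linarith
    have hbern : (1:ℝ)/2 ≤ (1 - 1/(4*(m:ℝ)))^(2*m) := by
      have hle1 : 1/(4*(m:ℝ)) ≤ 1 := by rw [div_le_one (by positivity)]; linarith
      have hB := one_add_mul_le_pow (a := -(1/(4*(m:ℝ)))) (by linarith) (2*m)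
      have hsimp : 1 + ((2*m : ℕ):ℝ) * (-(1/(4*(m:ℝ)))) = 1/2 := by
        push_cast
        field_simp
        ring
      rw [hsimp] at hB
      have : (1 + -(1/(4*(m:ℝ)))) = 1 - 1/(4*(m:ℝ)) := by ring
      rw [this] at hB
      exact hB
    have hr2 : (1 - 1/(4*(m:ℝ)))^(2*m) ≤ (r/τ₁)^(2*m) :=
      pow_le_pow_left₀ hfnn hfrac (2*m)
    have hexp : ((r/τ₁)^m)^2 = (r/τ₁)^(2*m) := by rw [← pow_mul, mul_comm]
    calc (1/2) * J1^2 ≤ (r/τ₁)^(2*m) * J1^2 := by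
          apply mul_le_mul_of_nonneg_right (le_trans hbern hr2) (by positivity)
      _ = ((r/τ₁)^m * J1)^2 := by rw [mul_pow, hexp]
      _ ≤ _ := hsq
  -- integral estimates
  set f : ℝ → ℝ := fun r => (besselJ m ((m:ℝ)*r))^2 * r with hfdef
  have hfcont : ContinuousOn f (Icc τ₂ τ₁) := by
    have hcont2 : Continuous (fun r : ℝ => (((m:ℝ)*r/2)^m * besselG m (((m:ℝ)*r)^2/4))^2 * r) := by
      apply Continuous.mul _ continuous_id
      apply Continuous.pow
      apply Continuous.mul
      · exact ((continuous_const.mul continuous_id).div_const 2).pow m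
      · exact (contG m).comp (((continuous_const.mul continuous_id).pow 2).div_const 4)
    apply ContinuousOn.congr hcont2.continuousOn
    intro r hr
    have hrpos : 0 < r := lt_of_lt_of_le h2 hr.1
    rw [hfdef]
    simp only
    rw [besselJ_eq m ((m:ℝ)*r) (by positivity)]
  have hsub1 : uIcc τ₂ a ⊆ Icc τ₂ τ₁ := by
    rw [uIcc_of_le ha2]; exact Icc_subset_Icc le_rfl ha1
  have hsub2 : uIcc a τ₁ ⊆ Icc τ₂ τ₁ := by
    rw [uIcc_of_le ha1]; exact Icc_subset_Icc ha2 le_rfl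
  have hint1 : IntervalIntegrable f volume τ₂ a :=
    (hfcont.mono hsub1).intervalIntegrable
  have hint2 : IntervalIntegrable f volume a τ₁ :=
    (hfcont.mono hsub2).intervalIntegrable
  have hsplit : ∫ r in τ₂..τ₁, f r = (∫ r in τ₂..a, f r) + ∫ r in a..τ₁, f r :=
    (intervalIntegral.integral_add_adjacent_intervals hint1 hint2).symm
  have hnn : 0 ≤ ∫ r in τ₂..a, f r := by
    apply intervalIntegral.integral_nonneg ha2
    intro u hu
    have : 0 ≤ u := le_trans h2.le hu.1
    rw [hfdef]
    positivity
  have hmono : ∫ r in a..τ₁, ((1/2) * J1^2 * τ₂) ≤ ∫ r in a..τ₁, f r := by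
    apply intervalIntegral.integral_mono_on ha1 intervalIntegrable_const hint2
    intro r hr
    have hk := key r hr
    have hrτ₂ : τ₂ ≤ r := le_trans ha2 hr.1
    rw [hfdef]
    simp only
    exact mul_le_mul hk hrτ₂ h2.le (by positivity)
  have hconst : ∫ _r in a..τ₁, ((1/2) * J1^2 * τ₂) = (τ₁ - a) * ((1/2) * J1^2 * τ₂) := by
    rw [intervalIntegral.integral_const, smul_eq_mul]
  have hτa : τ₁ - a = τ₁/(4*(m:ℝ)) := by rw [ha_def]; ring
  have hfinal : (τ₁*τ₂/8) / (m:ℝ) * J1^2 = (τ₁ - a) * ((1/2) * J1^2 * τ₂) := by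
    rw [hτa]; field_simp; ring
  calc τ₁*τ₂/8 / (m:ℝ) * J1^2 = (τ₁ - a) * ((1/2) * J1^2 * τ₂) := hfinal
    _ ≤ ∫ r in a..τ₁, f r := by rw [← hconst]; exact hmono
    _ ≤ ∫ r in τ₂..τ₁, f r := by rw [hsplit]; linarith
end

section
/- For every integer m ≥ 1 and every real k with 0 < k ≤ m, the function r ↦ J_m(k r)²/r is non-decreasing on the interval (0, 1]. -/
open MeasureTheory Filter Set

/-- auxiliary: `gB n t = ∑ (-1)^j t^j / (j! (n+j)!)`, so `J_n(x) = (x/2)^n gB n ((x/2)^2)`. -/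
noncomputable def gB (n : ℕ) (t : ℝ) : ℝ :=
  ∑' j : ℕ, (-1 : ℝ) ^ j * t ^ j / (j.factorial * (n + j).factorial)

lemma gB_term_bound (n j : ℕ) (t : ℝ) :
    ‖(-1 : ℝ) ^ j * t ^ j / (j.factorial * (n + j).factorial)‖ ≤ |t| ^ j / j.factorial := by
  rw [Real.norm_eq_abs, abs_div, abs_mul, abs_pow, abs_pow, abs_neg, abs_one, one_pow, one_mul,
    abs_of_nonneg (by positivity : (0:ℝ) ≤ (j.factorial : ℝ) * (n + j).factorial)]
  gcongr
  exact_mod_cast Nat.le_mul_of_pos_right _ (Nat.factorial_pos _)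

lemma gB_summable (n : ℕ) (t : ℝ) :
    Summable fun j : ℕ => (-1 : ℝ) ^ j * t ^ j / (j.factorial * (n + j).factorial) :=
  Summable.of_norm_bounded (Real.summable_pow_div_factorial |t|) (fun j => gB_term_bound n j t)

lemma tsum_pair (v : ℕ → ℝ) (hv : Summable v) :
    ∑' j, v j = ∑' j, (v (2 * j) + v (2 * j + 1)) := by
  have h2 : Function.Injective (fun j : ℕ => 2 * j) := fun a b h => by dsimp at h; omega
  have h3 : Function.Injective (fun j : ℕ => 2 * j + 1) := fun a b h => by dsimp at h; omega
  have he : Summable fun j => v (2 * j) := hv.comp_injective h2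
  have ho : Summable fun j => v (2 * j + 1) := hv.comp_injective h3
  rw [← tsum_even_add_odd he ho, Summable.tsum_add he ho]

lemma gB_bounds (n : ℕ) (t : ℝ) (ht : 0 ≤ t) (hn : 2 * t ≤ (n : ℝ) + 1) :
    1 / (2 * (n.factorial : ℝ)) ≤ gB n t ∧ gB n t ≤ 1 / (n.factorial : ℝ) := by
  set u : ℕ → ℝ := fun j => t ^ j / (j.factorial * (n + j).factorial) with hu
  set f : ℕ → ℝ := fun j => (-1 : ℝ) ^ j * t ^ j / (j.factorial * (n + j).factorial) with hf
  have hsum : Summable f := gB_summable n t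
  have hfe : ∀ j, f (2 * j) = u (2 * j) := by
    intro j
    simp only [hf, hu, pow_mul, neg_one_sq, one_pow, one_mul]
  have hfo : ∀ j, f (2 * j + 1) = -u (2 * j + 1) := by
    intro j
    have hne : ((-1 : ℝ)) ^ (2 * j + 1) = -1 := by
      rw [pow_succ, pow_mul]; norm_num
    simp only [hf, hu, hne, neg_one_mul, neg_div]
  have hun : ∀ j, 0 ≤ u j := fun j => by positivity
  have hdec : ∀ j, u (j + 1) ≤ u j / 2 := by
    intro j
    have hj1 : ((j + 1).factorial : ℝ) = ((j:ℝ) + 1) * j.factorial := by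
      push_cast [Nat.factorial_succ]; ring
    have hnj1 : ((n + (j + 1)).factorial : ℝ) = ((n:ℝ) + (j:ℝ) + 1) * (n + j).factorial := by
      have h : n + (j + 1) = (n + j) + 1 := by omega
      rw [h]; push_cast [Nat.factorial_succ]; ring
    have hjf : (0:ℝ) < (j.factorial : ℝ) := by exact_mod_cast Nat.factorial_pos j
    have hnjf : (0:ℝ) < ((n + j).factorial : ℝ) := by exact_mod_cast Nat.factorial_pos (n + j)
    have key : u (j + 1) = u j * (t / (((j:ℝ) + 1) * ((n:ℝ) + (j:ℝ) + 1))) := by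
      simp only [hu, pow_succ]
      rw [hj1, hnj1]
      field_simp
    have hjn : (0:ℝ) ≤ (j:ℝ) := Nat.cast_nonneg j
    have hnn : (0:ℝ) ≤ (n:ℝ) := Nat.cast_nonneg n
    have hq : t / (((j:ℝ) + 1) * ((n:ℝ) + (j:ℝ) + 1)) ≤ 1 / 2 := by
      rw [div_le_div_iff₀ (by positivity) (by norm_num)]
      nlinarith
    have hq0 : 0 ≤ t / (((j:ℝ) + 1) * ((n:ℝ) + (j:ℝ) + 1)) := by positivity
    calc u (j + 1) = u j * (t / (((j:ℝ) + 1) * ((n:ℝ) + (j:ℝ) + 1))) := key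
      _ ≤ u j * (1 / 2) := mul_le_mul_of_nonneg_left hq (hun j)
      _ = u j / 2 := by ring
  have h2 : Function.Injective (fun j : ℕ => 2 * j) := fun a b h => by dsimp at h; omega
  have h3 : Function.Injective (fun j : ℕ => 2 * j + 1) := fun a b h => by dsimp at h; omega
  have hgBe : gB n t = ∑' j, f j := rfl
  have hu0 : u 0 = 1 / (n.factorial : ℝ) := by
    simp [hu]
  constructor
  · have hgB2 : gB n t = ∑' j, (f (2 * j) + f (2 * j + 1)) := by
      rw [hgBe]; exact tsum_pair f hsum
    have hsw : Summable fun j => f (2 * j) + f (2 * j + 1) :=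
      (hsum.comp_injective h2).add (hsum.comp_injective h3)
    have hterm0 : u 0 - u 1 ≤ f (2 * 0) + f (2 * 0 + 1) := by
      rw [hfe, hfo]; norm_num
    have hle : f (2 * 0) + f (2 * 0 + 1) ≤ ∑' j, (f (2 * j) + f (2 * j + 1)) := by
      refine Summable.le_tsum hsw 0 fun j _ => ?_
      rw [hfe, hfo]
      have := hdec (2 * j)
      have := hun (2 * j)
      linarith
    have h1le : u 1 ≤ u 0 / 2 := hdec 0
    rw [hgB2]
    calc 1 / (2 * (n.factorial : ℝ)) = u 0 / 2 := by rw [hu0]; ring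
      _ ≤ u 0 - u 1 := by linarith
      _ ≤ _ := le_trans hterm0 hle
  · have hshift : gB n t = f 0 + ∑' j, f (j + 1) := by
      rw [hgBe]; exact Summable.tsum_eq_zero_add hsum
    have hsucc : Summable fun j => f (j + 1) := by
      rwa [summable_nat_add_iff 1]
    have hpair : (∑' j, f (j + 1)) = ∑' j, (f (2 * j + 1) + f (2 * j + 2)) :=
      tsum_pair (fun j => f (j + 1)) hsucc
    have hnp : (∑' j, (f (2 * j + 1) + f (2 * j + 2))) ≤ 0 := by
      refine tsum_nonpos fun j => ?_
      have he2 : f (2 * j + 2) = u (2 * j + 2) := by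
        have h22 : 2 * (j + 1) = 2 * j + 2 := by ring
        have := hfe (j + 1)
        rwa [h22] at this
      rw [hfo, he2]
      have := hdec (2 * j + 1)
      have := hun (2 * j + 1)
      linarith
    have hf0 : f 0 = 1 / (n.factorial : ℝ) := by
      simp [hf]
    rw [hshift, hpair, hf0]
    linarith

lemma gB_rec (n : ℕ) (t : ℝ) :
    gB n t = ((n : ℝ) + 1) * gB (n + 1) t - t * gB (n + 2) t := by
  set h : ℕ → ℝ := fun j => (-1 : ℝ) ^ j * (j : ℝ) * t ^ j / (j.factorial * (n + 1 + j).factorial)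
    with hh
  have hhsum : Summable h := by
    apply Summable.of_norm_bounded (Real.summable_pow_div_factorial (2 * |t|))
    intro j
    have hnorm : ‖h j‖ = (j : ℝ) * |t| ^ j / (j.factorial * (n + 1 + j).factorial) := by
      rw [hh]
      rw [Real.norm_eq_abs, abs_div, abs_mul, abs_mul, abs_pow, abs_pow, abs_neg, abs_one,
        one_pow, one_mul, abs_of_nonneg (Nat.cast_nonneg j),
        abs_of_nonneg (by positivity : (0:ℝ) ≤ (j.factorial : ℝ) * (n + 1 + j).factorial)]
    rw [hnorm]
    have b1 : (j : ℝ) * |t| ^ j / (j.factorial * (n + 1 + j).factorial)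
        ≤ (j : ℝ) * |t| ^ j / (j.factorial * 1) := by
      gcongr
      exact_mod_cast Nat.one_le_iff_ne_zero.mpr (Nat.factorial_ne_zero _)
    have b2 : (j : ℝ) * |t| ^ j / (j.factorial * 1) ≤ (2:ℝ) ^ j * |t| ^ j / j.factorial := by
      rw [mul_one]
      gcongr
      exact_mod_cast (Nat.lt_two_pow_self (n := j)).le
    calc (j : ℝ) * |t| ^ j / (j.factorial * (n + 1 + j).factorial)
        ≤ (2:ℝ) ^ j * |t| ^ j / j.factorial := le_trans b1 b2
      _ = (2 * |t|) ^ j / j.factorial := by rw [mul_pow]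
  have ha1 : Summable fun j : ℕ => (-1 : ℝ) ^ j * t ^ j / (j.factorial * (n + 1 + j).factorial) :=
    gB_summable (n + 1) t
  have ha2 : Summable fun j : ℕ => (-1 : ℝ) ^ j * t ^ j / (j.factorial * (n + 2 + j).factorial) :=
    gB_summable (n + 2) t
  have key : ∀ j : ℕ, (-1 : ℝ) ^ j * t ^ j / (j.factorial * (n + j).factorial)
      = ((n : ℝ) + 1) * ((-1 : ℝ) ^ j * t ^ j / (j.factorial * (n + 1 + j).factorial)) + h j := by
    intro j
    have e : n + 1 + j = (n + j) + 1 := by omega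
    have hfact : ((n + 1 + j).factorial : ℝ) = ((n : ℝ) + 1 + j) * (n + j).factorial := by
      rw [e, Nat.factorial_succ]; push_cast; ring
    have hjf : ((j.factorial : ℝ)) ≠ 0 := by positivity
    have hnjf : (((n + j).factorial : ℝ)) ≠ 0 := by positivity
    rw [hh]
    dsimp only
    rw [hfact]
    field_simp
  have step1 : gB n t = ((n : ℝ) + 1) * gB (n + 1) t + ∑' j, h j := by
    calc gB n t
        = ∑' j : ℕ, (((n : ℝ) + 1) * ((-1 : ℝ) ^ j * t ^ j / (j.factorial * (n + 1 + j).factorial))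
            + h j) := tsum_congr key
      _ = ((n : ℝ) + 1) * gB (n + 1) t + ∑' j, h j := by
          rw [Summable.tsum_add (ha1.mul_left _) hhsum, tsum_mul_left]; rfl
  have h0 : h 0 = 0 := by simp [hh]
  have hsucc : ∀ j : ℕ, h (j + 1)
      = -t * ((-1 : ℝ) ^ j * t ^ j / (j.factorial * (n + 2 + j).factorial)) := by
    intro j
    have e1 : n + 1 + (j + 1) = n + 2 + j := by omega
    have e2 : (((j + 1).factorial : ℕ) : ℝ) = ((j : ℝ) + 1) * j.factorial := by
      rw [Nat.factorial_succ]; push_cast; ring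
    rw [hh]
    dsimp only
    rw [e1, e2, pow_succ, pow_succ]
    have hjf : ((j.factorial : ℝ)) ≠ 0 := by positivity
    have hnjf : (((n + 2 + j).factorial : ℝ)) ≠ 0 := by positivity
    have hj1 : ((j : ℝ) + 1) ≠ 0 := by positivity
    push_cast
    field_simp
  have step2 : (∑' j, h j) = -t * gB (n + 2) t := by
    rw [Summable.tsum_eq_zero_add hhsum, h0, zero_add]
    calc (∑' j, h (j + 1))
        = ∑' j : ℕ, -t * ((-1 : ℝ) ^ j * t ^ j / (j.factorial * (n + 2 + j).factorial)) :=
          tsum_congr hsucc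
      _ = -t * gB (n + 2) t := by rw [tsum_mul_left]; rfl
  rw [step1, step2]; ring

lemma gB_inv (p : ℕ) (t : ℝ) (ht : 0 ≤ t) (ht4 : 4 * t ≤ ((p : ℝ) + 1) ^ 2) :
    0 < gB (p + 1) t ∧ 0 < gB (p + 2) t ∧ ((p : ℝ) + 2) * gB (p + 2) t ≤ 2 * gB (p + 1) t := by
  set P : ℕ → Prop := fun n => 0 < gB (n + 1) t ∧ 0 < gB (n + 2) t ∧
    ((n : ℝ) + 2) * gB (n + 2) t ≤ 2 * gB (n + 1) t with hP
  have base : ∀ n : ℕ, 2 * t ≤ (n : ℝ) + 2 → P n := by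
    intro n h2
    have hb1 := gB_bounds (n + 1) t ht (by push_cast; linarith)
    have hb2 := gB_bounds (n + 2) t ht (by push_cast; linarith)
    have hf1 : (0:ℝ) < ((n+1).factorial : ℝ) := by exact_mod_cast Nat.factorial_pos _
    have hf2 : (0:ℝ) < ((n+2).factorial : ℝ) := by exact_mod_cast Nat.factorial_pos _
    have hfe : ((n+2).factorial : ℝ) = ((n:ℝ) + 2) * ((n+1).factorial : ℝ) := by
      have e : n + 2 = (n + 1) + 1 := by omega
      rw [e, Nat.factorial_succ]; push_cast; ring
    refine ⟨lt_of_lt_of_le (by positivity) hb1.1, lt_of_lt_of_le (by positivity) hb2.1, ?_⟩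
    have h1 : ((n:ℝ) + 2) * gB (n + 2) t ≤ ((n:ℝ) + 2) * (1 / ((n+2).factorial : ℝ)) := by
      have := hb2.2
      nlinarith
    have h2' : ((n:ℝ) + 2) * (1 / ((n+2).factorial : ℝ)) = 1 / ((n+1).factorial : ℝ) := by
      rw [hfe]; field_simp
    have h3 : (1:ℝ) / ((n+1).factorial : ℝ) ≤ 2 * gB (n + 1) t := by
      have := hb1.1
      calc (1:ℝ) / ((n+1).factorial : ℝ) = 2 * (1 / (2 * ((n+1).factorial : ℝ))) := by
            field_simp
        _ ≤ 2 * gB (n + 1) t := by linarith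
    linarith [h1, h2' ▸ h1]
  have step : ∀ n : ℕ, p ≤ n → P (n + 1) → P n := by
    intro n hpn hPn1
    obtain ⟨hg2, hg3, hinv⟩ := hPn1
    have e2 : n + 1 + 1 = n + 2 := by omega
    have e3 : n + 1 + 2 = n + 3 := by omega
    rw [e2] at hg2
    rw [e3] at hg3 hinv
    rw [e2] at hinv
    push_cast at hinv
    -- hinv : (n+1+2) * gB (n+3) t ≤ 2 * gB (n+2) t  (coefficient ↑(n+1)+2 = n+3)
    have hrec := gB_rec (n + 1) t
    rw [e2, e3] at hrec
    push_cast at hrec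
    -- hrec : gB (n+1) t = (n+2) * gB (n+2) t - t * gB (n+3) t
    have hmul : t * (((n:ℝ) + 3) * gB (n + 3) t) ≤ t * (2 * gB (n + 2) t) := by
      apply mul_le_mul_of_nonneg_left _ ht
      linarith [hinv]
    have hpc : (p : ℝ) ≤ (n : ℝ) := by exact_mod_cast hpn
    have hnn : (0:ℝ) ≤ (n : ℝ) := Nat.cast_nonneg n
    have ht4' : 4 * t ≤ ((n:ℝ) + 1) ^ 2 := by nlinarith [hpc, (Nat.cast_nonneg p : (0:ℝ) ≤ (p:ℝ)), hnn]
    have hA : t * gB (n + 3) t * ((n:ℝ) + 3) ≤ 2 * t * gB (n + 2) t := by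
      linear_combination hmul
    have hB : 4 * t * gB (n + 2) t ≤ ((n:ℝ) + 1) ^ 2 * gB (n + 2) t :=
      mul_le_mul_of_nonneg_right ht4' hg2.le
    have hpoly : (0:ℝ) ≤ ((n:ℝ) ^ 2 + 8 * (n:ℝ) + 10) * gB (n + 2) t :=
      mul_nonneg (by positivity) hg2.le
    have hn3 : (0:ℝ) ≤ (n:ℝ) + 3 := by positivity
    have hg1 : 0 < gB (n + 1) t := by
      rw [hrec]
      nlinarith [hA, hB, hpoly, hg2, hn3]
    refine ⟨hg1, hg2, ?_⟩
    rw [hrec]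
    nlinarith [hA, hB, hpoly, hg2, hn3]
  have main : ∀ d n : ℕ, p ≤ n → 2 * t ≤ (n : ℝ) + (d : ℝ) + 2 → P n := by
    intro d
    induction d with
    | zero => intro n hn h; exact base n (by push_cast at h ⊢; linarith)
    | succ d ihd =>
      intro n hn h
      by_cases hc : 2 * t ≤ (n : ℝ) + 2
      · exact base n hc
      · exact step n hn (ihd (n + 1) (le_trans hn (Nat.le_succ n)) (by push_cast at h ⊢; linarith))
  exact main ⌈2 * t⌉₊ p le_rfl (by
    have := Nat.le_ceil (2 * t)
    have hpn : (0:ℝ) ≤ (p : ℝ) := Nat.cast_nonneg p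
    linarith)

lemma gB_core (p : ℕ) (t : ℝ) (ht : 0 ≤ t) (ht4 : 4 * t ≤ ((p : ℝ) + 1) ^ 2) :
    0 < gB (p + 1) t ∧ (2 * (p : ℝ) + 3) * gB (p + 1) t ≤ 4 * gB p t := by
  obtain ⟨hg1, hg2, hinv⟩ := gB_inv p t ht ht4
  have hrec := gB_rec p t
  -- gB p t = (p+1) * gB (p+1) t - t * gB (p+2) t
  have hmul : t * (((p:ℝ) + 2) * gB (p + 2) t) ≤ t * (2 * gB (p + 1) t) :=
    mul_le_mul_of_nonneg_left hinv ht
  have hpn : (0:ℝ) ≤ (p : ℝ) := Nat.cast_nonneg p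
  refine ⟨hg1, ?_⟩
  rw [hrec]
  have hA : t * gB (p + 2) t * ((p:ℝ) + 2) ≤ 2 * t * gB (p + 1) t := by
    linear_combination hmul
  have hB : 4 * t * gB (p + 1) t ≤ ((p:ℝ) + 1) ^ 2 * gB (p + 1) t :=
    mul_le_mul_of_nonneg_right ht4 hg1.le
  have hp2 : (0:ℝ) ≤ (p:ℝ) + 2 := by positivity
  nlinarith [hA, hB, hg1, hg2, hp2, mul_nonneg hpn hg1.le]

lemma gB_hasDerivAt (n : ℕ) (t : ℝ) : HasDerivAt (gB n) (-gB (n + 1) t) t := by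
  set R : ℝ := |t| + 1 with hR
  have habs : 0 ≤ |t| := abs_nonneg t
  have hR1 : (1:ℝ) ≤ R := by rw [hR]; linarith
  have hR0 : (0:ℝ) < R := by linarith
  have htmem : t ∈ Ioo (-R) R := by
    constructor
    · have := neg_abs_le t; rw [hR]; linarith
    · have := le_abs_self t; rw [hR]; linarith
  set f : ℕ → ℝ → ℝ := fun j y => ((-1 : ℝ) ^ j / (j.factorial * (n + j).factorial)) * y ^ j
    with hf
  set f' : ℕ → ℝ → ℝ := fun j y =>
    ((-1 : ℝ) ^ j / (j.factorial * (n + j).factorial)) * ((j : ℝ) * y ^ (j - 1)) with hf'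
  have hfg : ∀ y : ℝ, gB n y = ∑' j, f j y := by
    intro y
    refine tsum_congr fun j => ?_
    rw [hf]; ring
  have hderiv : ∀ (j : ℕ) (y : ℝ), y ∈ Ioo (-R) R → HasDerivAt (f j) (f' j y) y := by
    intro j y _
    exact (hasDerivAt_pow j y).const_mul _
  have hbound : ∀ (j : ℕ) (y : ℝ), y ∈ Ioo (-R) R → ‖f' j y‖ ≤ (2 * R) ^ j / j.factorial := by
    intro j y hy
    have hyR : |y| ≤ R := by
      rw [abs_le]; exact ⟨hy.1.le, hy.2.le⟩
    have h1 : ‖f' j y‖ = (1 / ((j.factorial : ℝ) * (n + j).factorial)) * ((j : ℝ) * |y| ^ (j - 1)) := by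
      simp only [hf', Real.norm_eq_abs, abs_mul, abs_div, abs_pow, abs_neg, abs_one, one_pow,
        Nat.abs_cast]
    rw [h1]
    have h2 : (1 : ℝ) / ((j.factorial : ℝ) * (n + j).factorial) ≤ 1 / j.factorial := by
      gcongr
      exact_mod_cast Nat.le_mul_of_pos_right j.factorial (Nat.factorial_pos (n + j))
    have h3 : |y| ^ (j - 1) ≤ R ^ (j - 1) := pow_le_pow_left₀ (abs_nonneg y) hyR _
    have h4 : R ^ (j - 1) ≤ R ^ j := pow_le_pow_right₀ hR1 (Nat.sub_le j 1)
    have h5 : (j : ℝ) ≤ 2 ^ j := by exact_mod_cast (Nat.lt_two_pow_self (n := j)).le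
    have h6 : (j : ℝ) * |y| ^ (j - 1) ≤ 2 ^ j * R ^ j := by
      have := mul_le_mul h5 (le_trans h3 h4) (by positivity) (by positivity)
      linarith
    calc (1 / ((j.factorial : ℝ) * (n + j).factorial)) * ((j : ℝ) * |y| ^ (j - 1))
        ≤ (1 / (j.factorial : ℝ)) * (2 ^ j * R ^ j) := by
          apply mul_le_mul h2 h6 (by positivity) (by positivity)
      _ = (2 * R) ^ j / j.factorial := by rw [mul_pow]; ring
  have husum : Summable fun j : ℕ => (2 * R) ^ j / (j.factorial : ℝ) :=
    Real.summable_pow_div_factorial (2 * R)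
  have hsum0 : Summable fun j => f j t := by
    apply Summable.of_norm_bounded (Real.summable_pow_div_factorial |t|)
    intro j
    have := gB_term_bound n j t
    have he : f j t = (-1 : ℝ) ^ j * t ^ j / (j.factorial * (n + j).factorial) := by
      rw [hf]; ring
    rw [he]
    exact this
  have hmain := hasDerivAt_tsum_of_isPreconnected husum isOpen_Ioo
    (convex_Ioo (-R) R).isPreconnected hderiv hbound htmem hsum0 htmem
  have hds : Summable fun j => f' j t := by
    apply Summable.of_norm_bounded husum
    intro j
    exact hbound j t htmem
  have hval : (∑' j, f' j t) = -gB (n + 1) t := by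
    have h0 : f' 0 t = 0 := by rw [hf']; simp
    have hsucc : ∀ j : ℕ, f' (j + 1) t
        = -((-1 : ℝ) ^ j * t ^ j / (j.factorial * (n + 1 + j).factorial)) := by
      intro j
      have e1 : n + (j + 1) = n + 1 + j := by omega
      have e2 : (((j + 1).factorial : ℕ) : ℝ) = ((j : ℝ) + 1) * j.factorial := by
        rw [Nat.factorial_succ]; push_cast; ring
      rw [hf']
      dsimp only
      rw [e1, e2, pow_succ]
      have hjf : ((j.factorial : ℝ)) ≠ 0 := by positivity
      have hnjf : (((n + 1 + j).factorial : ℝ)) ≠ 0 := by positivity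
      have hj1 : ((j : ℝ) + 1) ≠ 0 := by positivity
      push_cast
      field_simp
    rw [Summable.tsum_eq_zero_add hds, h0, zero_add]
    calc (∑' j, f' (j + 1) t)
        = ∑' j : ℕ, -((-1 : ℝ) ^ j * t ^ j / (j.factorial * (n + 1 + j).factorial)) :=
          tsum_congr hsucc
      _ = -gB (n + 1) t := by rw [tsum_neg]; rfl
  rw [hval] at hmain
  have hfun : (fun z => ∑' j, f j z) = gB n := by
    funext z; rw [hfg z]
  rwa [hfun] at hmain

lemma besselJ_eq_gB (m : ℕ) (x : ℝ) :
    besselJ (m : ℝ) x = (x / 2) ^ m * gB m ((x / 2) ^ 2) := by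
  unfold besselJ gB
  rw [← tsum_mul_left]
  refine tsum_congr fun j => ?_
  have h1 : Real.Gamma ((m : ℝ) + (j : ℝ) + 1) = ((m + j).factorial : ℝ) := by
    rw [show ((m : ℝ) + (j : ℝ) + 1) = ((m + j : ℕ) : ℝ) + 1 by push_cast; ring]
    exact_mod_cast Real.Gamma_nat_eq_factorial (m + j)
  have h2 : ((2 : ℝ) * (j : ℝ) + (m : ℝ)) = ((2 * j + m : ℕ) : ℝ) := by push_cast; ring
  rw [h1, h2, Real.rpow_natCast]
  rw [pow_add, pow_mul]
  ring

/-- For every integer `m ≥ 1` and every `0 < k ≤ m`, the function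
`r ↦ J_m(kr)²/r` is non-decreasing on `(0, 1]`. -/
theorem stmt11 (m : ℕ) (hm : 1 ≤ m) (k : ℝ) (hk0 : 0 < k) (hk : k ≤ (m:ℝ)) :
    MonotoneOn (fun r : ℝ => (besselJ m (k * r)) ^ 2 / r) (Set.Ioc (0:ℝ) 1) := by
  obtain ⟨p, rfl⟩ : ∃ p, m = p + 1 := ⟨m - 1, by omega⟩
  set c : ℝ := (k / 2) ^ 2 with hc
  have hc0 : 0 < c := by positivity
  set F : ℝ → ℝ := fun r =>
    (k / 2) ^ (2 * (p + 1)) * (r ^ (2 * p + 1) * gB (p + 1) (c * r ^ 2) ^ 2) with hF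
  -- derivative of F
  have hFd : ∀ r : ℝ, HasDerivAt F
      ((k / 2) ^ (2 * (p + 1)) * ((((2 * p + 1 : ℕ)) : ℝ) * r ^ (2 * p) * gB (p + 1) (c * r ^ 2) ^ 2
        + r ^ (2 * p + 1) *
          (2 * gB (p + 1) (c * r ^ 2) * (-gB (p + 2) (c * r ^ 2) * (c * (2 * r)))))) r := by
    intro r
    have hu : HasDerivAt (fun r : ℝ => c * r ^ 2) (c * (2 * r)) r := by
      have := (hasDerivAt_pow 2 r).const_mul c
      simpa using this
    have hgd : HasDerivAt (gB (p + 1)) (-gB (p + 2) (c * r ^ 2)) (c * r ^ 2) :=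
      gB_hasDerivAt (p + 1) (c * r ^ 2)
    have hcomp : HasDerivAt (fun r : ℝ => gB (p + 1) (c * r ^ 2))
        (-gB (p + 2) (c * r ^ 2) * (c * (2 * r))) r := by
          have h := hgd.comp r hu
          exact h
    have hsq : HasDerivAt (fun r : ℝ => gB (p + 1) (c * r ^ 2) ^ 2)
        ((2 : ℕ) * gB (p + 1) (c * r ^ 2) ^ 1 * (-gB (p + 2) (c * r ^ 2) * (c * (2 * r)))) r :=
      hcomp.pow 2
    have hpow : HasDerivAt (fun r : ℝ => r ^ (2 * p + 1))
        (((2 * p + 1 : ℕ) : ℝ) * r ^ (2 * p)) r := by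
      have := hasDerivAt_pow (2 * p + 1) r
      simpa using this
    have hmul := (hpow.mul hsq).const_mul ((k / 2) ^ (2 * (p + 1)))
    refine hmul.congr_deriv ?_
    push_cast
    ring
  have hdiff : Differentiable ℝ F := fun r => (hFd r).differentiableAt
  -- derivative nonnegative on (0,1)
  have hDnn : ∀ r ∈ Ioo (0:ℝ) 1, 0 ≤ deriv F r := by
    intro r hr
    obtain ⟨hr0, hr1⟩ := hr
    have ht0 : 0 ≤ c * r ^ 2 := by positivity
    have ht4 : 4 * (c * r ^ 2) ≤ ((p : ℝ) + 1) ^ 2 := by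
      have hk2 : k ^ 2 ≤ ((p : ℝ) + 1) ^ 2 := by
        have : (((p + 1 : ℕ)) : ℝ) = (p : ℝ) + 1 := by push_cast; ring
        nlinarith [hk0.le, this ▸ hk]
      have hr2 : r ^ 2 ≤ 1 := by nlinarith
      have : 4 * c = k ^ 2 := by rw [hc]; ring
      nlinarith [hc0.le]
    obtain ⟨hG1, hcore⟩ := gB_core p (c * r ^ 2) ht0 ht4
    have hrec := gB_rec p (c * r ^ 2)
    push_cast at hrec hcore
    have key : 0 ≤ (2 * (p : ℝ) + 1) * gB (p + 1) (c * r ^ 2)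
        - 4 * (c * r ^ 2) * gB (p + 2) (c * r ^ 2) := by nlinarith [hrec, hcore]
    rw [(hFd r).deriv]
    have heq : (k / 2) ^ (2 * (p + 1)) * ((((2 * p + 1 : ℕ)) : ℝ) * r ^ (2 * p) * gB (p + 1) (c * r ^ 2) ^ 2
        + r ^ (2 * p + 1) *
          (2 * gB (p + 1) (c * r ^ 2) * (-gB (p + 2) (c * r ^ 2) * (c * (2 * r)))))
        = (k / 2) ^ (2 * (p + 1)) * r ^ (2 * p) * (gB (p + 1) (c * r ^ 2) *
            ((2 * (p : ℝ) + 1) * gB (p + 1) (c * r ^ 2)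
              - 4 * (c * r ^ 2) * gB (p + 2) (c * r ^ 2))) := by
      push_cast
      ring
    rw [heq]
    have h1 : (0:ℝ) ≤ (k / 2) ^ (2 * (p + 1)) * r ^ (2 * p) := by positivity
    exact mul_nonneg h1 (mul_nonneg hG1.le key)
  have hmono : MonotoneOn F (Ioc (0:ℝ) 1) := by
    apply monotoneOn_of_deriv_nonneg (convex_Ioc 0 1) hdiff.continuous.continuousOn
      (hdiff.differentiableOn)
    intro x hx
    rw [interior_Ioc] at hx
    exact hDnn x hx
  -- transfer to the original function
  have hpt : ∀ r ∈ Ioc (0:ℝ) 1, (besselJ ((p + 1 : ℕ) : ℝ) (k * r)) ^ 2 / r = F r := by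
    intro r hr
    have hr0 : r ≠ 0 := ne_of_gt hr.1
    rw [besselJ_eq_gB (p + 1) (k * r)]
    have harg : ((k * r) / 2) ^ 2 = c * r ^ 2 := by rw [hc]; ring
    rw [harg, hF]
    field_simp
    ring
  intro a ha b hb hab
  have := hmono ha hb hab
  simp only [hpt a ha, hpt b hb]
  exact this
end
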